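/- Let μ be the hardcore distribution with fugacity λ > 0 on a bipartite graph G = (V_L ⊎ V_R, E), let M ≥ 1 and k ≥ 2M be integers, suppose the marginal distribution μ_L on V_L is M-coupling independent, and let V_L = U_1 ⊎ ⋯ ⊎ U_k be any partition of V_L. Then the block dynamics B, which at each step picks S ⊆ [k] with |S| = 2M uniformly at random and resamples the coordinates on U_S ∪ V_R from μ conditioned on the values on V_L∖U_S (where U_S = ⋃_{i∈S} U_i), has relaxation time at most 2^{k−2M}; equivalently, for every f: {−,+}^{V_L ∪ V_R} → ℝ, Var_μ[f] ≤ (2^{k−2M}/C(k,2M)) · Σ_{S ⊆ [k], |S| = 2M} μ[Var_{U_S ∪ V_R}[f]], where C(k,2M) is the binomial coefficient. -/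

import Mathlib

open Finset
open scoped BigOperators Classical

namespace Paper

/-- Configurations: assignments of one of `q` spins to each of `n` vertices. -/
abbrev Config (n q : ℕ) := Fin n → Fin q

/-- A spin system on a graph `G` on vertex set `Fin n` with spin set `Fin q`:
nonnegative external fields and nonnegative symmetric interaction matrices. -/
structure SpinSystem (n q : ℕ) (G : SimpleGraph (Fin n)) where
  b : Fin n → Fin q → ℝ
  A : Fin n → Fin n → Fin q → Fin q → ℝ
  b_nonneg : ∀ v a, 0 ≤ b v a
  A_nonneg : ∀ v w a c, 0 ≤ A v w a c
  A_symm : ∀ v w a c, A v w a c = A w v c a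

variable {n q k : ℕ}

/-- The number of neighbours of `v` (in `G`) lying inside `Λ`. -/
noncomputable def degIn (G : SimpleGraph (Fin n)) (Λ : Finset (Fin n)) (v : Fin n) : ℕ :=
  (Λ.filter fun w => G.Adj v w).card

/-- The maximum degree of `G`. -/
noncomputable def maxDeg (G : SimpleGraph (Fin n)) : ℕ :=
  univ.sup fun v => degIn G univ v

/-- The edges of `G`, listed as ordered pairs `p` with `p.1 < p.2`. -/
noncomputable def edgePairs (G : SimpleGraph (Fin n)) : Finset (Fin n × Fin n) :=
  univ.filter fun p => p.1 < p.2 ∧ G.Adj p.1 p.2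

/-- Conditional Gibbs weight: the free set is `Λ`, and the pinning uses the values
of `τ` outside of `Λ`.  Edges lying entirely outside `Λ` are dropped. -/
noncomputable def condWeight {G : SimpleGraph (Fin n)} (S : SpinSystem n q G)
    (Λ : Finset (Fin n)) (τ σ : Config n q) : ℝ :=
  (if ∀ v, v ∉ Λ → σ v = τ v then (1 : ℝ) else 0)
    * (∏ v ∈ Λ, S.b v (σ v))
    * ∏ p ∈ (edgePairs G).filter (fun p => p.1 ∈ Λ ∨ p.2 ∈ Λ),
        S.A p.1 p.2 (σ p.1) (σ p.2)

/-- The conditional Gibbs distribution `μ^τ` with free set `Λ` and pinning `τ`. -/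
noncomputable def condDist {G : SimpleGraph (Fin n)} (S : SpinSystem n q G)
    (Λ : Finset (Fin n)) (τ : Config n q) : Config n q → ℝ :=
  fun σ => condWeight S Λ τ σ / ∑ σ' : Config n q, condWeight S Λ τ σ'

/-- The Gibbs distribution of the spin system. -/
noncomputable def gibbsDist {G : SimpleGraph (Fin n)} (S : SpinSystem n q G) :
    Config n q → ℝ :=
  fun σ => condWeight S univ σ σ / ∑ σ' : Config n q, condWeight S univ σ' σ'

/-- Every conditional weight has positive total mass. -/
def PosCondMass {G : SimpleGraph (Fin n)} (S : SpinSystem n q G) : Prop :=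
  ∀ (Λ : Finset (Fin n)) (τ : Config n q), 0 < ∑ σ : Config n q, condWeight S Λ τ σ

/-- Expectation of `f` under (the finitely supported density) `μ`. -/
noncomputable def expVal (μ f : Config n q → ℝ) : ℝ := ∑ σ, μ σ * f σ

/-- Variance of `f` under `μ`. -/
noncomputable def varD (μ f : Config n q → ℝ) : ℝ :=
  expVal μ fun σ => (f σ - expVal μ f) ^ 2

/-- `μ` conditioned to agree with `σ₀` on the set `T`. -/
noncomputable def restrictDist (μ : Config n q → ℝ) (T : Finset (Fin n)) (σ₀ : Config n q) :
    Config n q → ℝ :=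
  fun σ => (if ∀ v ∈ T, σ v = σ₀ v then μ σ else 0)
    / ∑ σ' ∈ univ.filter (fun σ' : Config n q => ∀ v ∈ T, σ' v = σ₀ v), μ σ'

/-- `μ[Var_S[f]]`: the average over `σ ~ μ` of the variance of `f` under `μ`
conditioned on the coordinates outside the free set `Sfree`. -/
noncomputable def avgCondVar (μ : Config n q → ℝ) (Sfree : Finset (Fin n))
    (f : Config n q → ℝ) : ℝ :=
  ∑ σ, μ σ * varD (restrictDist μ Sfreeᶜ σ) f

/-- `C` is an upper bound on the relaxation time of the Glauber dynamics on `μ`: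
approximate tensorization of variance with constant `C`. -/
def IsRelaxBound (μ : Config n q → ℝ) (C : ℝ) : Prop :=
  0 ≤ C ∧ ∀ f : Config n q → ℝ,
    varD μ f ≤ C / (n : ℝ) * ∑ v : Fin n, avgCondVar μ {v} f

/-- `π` is a coupling of `μ` and `ν`. -/
structure IsCoupling (μ ν : Config n q → ℝ) (π : Config n q → Config n q → ℝ) : Prop where
  nonneg : ∀ x y, 0 ≤ π x y
  fst_marginal : ∀ x, ∑ y, π x y = μ x
  snd_marginal : ∀ y, ∑ x, π x y = ν y

/-- Weighted Hamming distance with weight function `ρ`. -/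
noncomputable def hamW (ρ : Fin n → ℕ) (x y : Config n q) : ℝ :=
  ∑ v ∈ univ.filter (fun v => x v ≠ y v), (ρ v : ℝ)

/-- Expected weighted Hamming distance under a coupling `π`. -/
noncomputable def expHam (π : Config n q → Config n q → ℝ) (ρ : Fin n → ℕ) : ℝ :=
  ∑ x, ∑ y, π x y * hamW ρ x y

/-- Coupling independence (with a fixed witnessing weight `ρ`) of the Gibbs
distribution of the spin system `S`, using Gibbs conditional distributions. -/
def CoupIndepWith {G : SimpleGraph (Fin n)} (S : SpinSystem n q G) (ρ : Fin n → ℕ)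
    (C : ℝ) : Prop :=
  (∀ v, 0 < ρ v) ∧
  ∀ (P : Finset (Fin n)) (v₀ : Fin n) (σ₁ σ₂ : Config n q),
    v₀ ∈ P → σ₁ v₀ ≠ σ₂ v₀ → (∀ v ∈ P, v ≠ v₀ → σ₁ v = σ₂ v) →
    ∃ π, IsCoupling (condDist S Pᶜ σ₁) (condDist S Pᶜ σ₂) π ∧
      expHam π ρ ≤ C * (ρ v₀ : ℝ)

/-- The spin system `S` is `C`-coupling independent. -/
def CoupIndep {G : SimpleGraph (Fin n)} (S : SpinSystem n q G) (C : ℝ) : Prop :=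
  ∃ ρ : Fin n → ℕ, CoupIndepWith S ρ C

/-- `C`-coupling independence for a bare distribution `μ`, using conditionals
obtained by restriction. -/
def CoupIndepDist (μ : Config n q → ℝ) (C : ℝ) : Prop :=
  ∃ ρ : Fin n → ℕ, (∀ v, 0 < ρ v) ∧
  ∀ (P : Finset (Fin n)) (v₀ : Fin n) (σ₁ σ₂ : Config n q),
    v₀ ∈ P → σ₁ v₀ ≠ σ₂ v₀ → (∀ v ∈ P, v ≠ v₀ → σ₁ v = σ₂ v) →
    ∃ π, IsCoupling (restrictDist μ P σ₁) (restrictDist μ P σ₂) π ∧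
      expHam π ρ ≤ C * (ρ v₀ : ℝ)

/-- `Λ ∈ D(η)`: the induced subgraph `G[Λ]` has maximum degree at most `η·Δ`. -/
def InDeta (G : SimpleGraph (Fin n)) (η : ℝ) (Λ : Finset (Fin n)) : Prop :=
  ∀ v ∈ Λ, (degIn G Λ v : ℝ) ≤ η * (maxDeg G : ℝ)

/-- `U` is a partition of the vertex set into `k` (possibly empty) parts. -/
def IsPartition (U : Fin k → Finset (Fin n)) : Prop :=
  (∀ i j, i ≠ j → Disjoint (U i) (U j)) ∧ ∀ v : Fin n, ∃ i, v ∈ U i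

/-- A `(ξ,k)`-degree partition of `G`. -/
def IsDegreePartition (G : SimpleGraph (Fin n)) (ξ : ℝ) (U : Fin k → Finset (Fin n)) :
    Prop :=
  IsPartition U ∧ ∀ (v : Fin n) (i : Fin k),
    (degIn G (U i) v : ℝ) ≤ (1 + ξ) * (maxDeg G : ℝ) / (k : ℝ)

/-- `U_R = ⋃_{i ∈ R} U_i`. -/
noncomputable def unionBlocks (U : Fin k → Finset (Fin n)) (R : Finset (Fin k)) :
    Finset (Fin n) :=
  R.biUnion U

/-- The Glauber update `P_v` at vertex `v` for the distribution `μ`. -/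
noncomputable def glauberUpdate (μ : Config n q → ℝ) (v : Fin n) (x y : Config n q) : ℝ :=
  if ∀ u, u ≠ v → y u = x u then
    (if 0 < ∑ σ ∈ univ.filter (fun σ : Config n q => ∀ u, u ≠ v → σ u = x u), μ σ then
      μ y / ∑ σ ∈ univ.filter (fun σ : Config n q => ∀ u, u ≠ v → σ u = x u), μ σ
    else if y = x then 1 else 0)
  else 0

/-- The transition matrix of the Glauber dynamics on `μ`. -/
noncomputable def glauberP (μ : Config n q → ℝ) : Config n q → Config n q → ℝ :=
  fun x y => (1 / (n : ℝ)) * ∑ v : Fin n, glauberUpdate μ v x y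

/-- One step of a Markov kernel applied to a distribution. -/
noncomputable def stepD (P : Config n q → Config n q → ℝ) (ν : Config n q → ℝ) :
    Config n q → ℝ :=
  fun y => ∑ x, ν x * P x y

/-- The Dirac distribution at `x₀`. -/
noncomputable def delta (x₀ : Config n q) : Config n q → ℝ :=
  fun y => if y = x₀ then 1 else 0

/-- Total variation distance. -/
noncomputable def dTV (μ ν : Config n q → ℝ) : ℝ := (1 / 2) * ∑ σ, |μ σ - ν σ|

/-- TV distance to `μ` after `t` steps of the Glauber dynamics on `μ` started at `x₀`. -/
noncomputable def glauberDist (μ : Config n q → ℝ) (x₀ : Config n q) (t : ℕ) : ℝ :=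
  dTV ((stepD (glauberP μ))^[t] (delta x₀)) μ

/-- Coordinatewise partial order on configurations induced by the per-vertex
total orders `le`. -/
def ConfLE (le : Fin n → Fin q → Fin q → Prop) (x y : Config n q) : Prop :=
  ∀ v, le v (x v) (y v)

/-- Stochastic domination with respect to the order `le`. -/
def StochDom (le : Fin n → Fin q → Fin q → Prop) (μ ν : Config n q → ℝ) : Prop :=
  ∃ π, IsCoupling μ ν π ∧ ∀ x y, π x y ≠ 0 → ConfLE le x y

/-- `μ` is a monotone spin system w.r.t. the per-vertex orders `le`. -/
def MonotoneSystem (le : Fin n → Fin q → Fin q → Prop) (μ : Config n q → ℝ) : Prop :=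
  ∀ (v : Fin n) (x y : Config n q), ConfLE le x y →
    StochDom le (glauberUpdate μ v x) (glauberUpdate μ v y)

/-- Hardcore weight: spin `1` means occupied. -/
noncomputable def hcWeight (G : SimpleGraph (Fin n)) (lam : ℝ) (σ : Config n 2) : ℝ :=
  if ∀ u v, G.Adj u v → ¬(σ u = 1 ∧ σ v = 1) then
    lam ^ (univ.filter fun v => σ v = 1).card
  else 0

/-- The hardcore distribution on `G` with fugacity `lam`. -/
noncomputable def hardcoreDist (G : SimpleGraph (Fin n)) (lam : ℝ) : Config n 2 → ℝ :=
  fun σ => hcWeight G lam σ / ∑ σ' : Config n 2, hcWeight G lam σ'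

/-- The tree uniqueness threshold `λ_c(Δ)`. -/
noncomputable def lambdaC (Δ : ℕ) : ℝ := ((Δ : ℝ) - 1) ^ (Δ - 1) / ((Δ : ℝ) - 2) ^ Δ

/-- `G` is bipartite with parts `VL` and `VLᶜ`. -/
def Bipartite (G : SimpleGraph (Fin n)) (VL : Finset (Fin n)) : Prop :=
  ∀ u v, G.Adj u v → (u ∈ VL ↔ v ∉ VL)

/-- Maximum degree of `G` among the vertices of `W`. -/
noncomputable def maxDegOn (G : SimpleGraph (Fin n)) (W : Finset (Fin n)) : ℕ :=
  W.sup fun v => degIn G univ v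

/-- The marginal of `μ` on `W`, realized as a distribution on full configurations
that vanish (take spin `0`) outside of `W`. -/
noncomputable def marginalOn (μ : Config n 2 → ℝ) (W : Finset (Fin n)) :
    Config n 2 → ℝ :=
  fun σ => if ∀ v, v ∉ W → σ v = 0 then
      ∑ σ' ∈ univ.filter (fun σ' : Config n 2 => ∀ v ∈ W, σ' v = σ v), μ σ'
    else 0

/-- Proper list colorings of `G` with lists `L`. -/
noncomputable def properColorings (G : SimpleGraph (Fin n)) (L : Fin n → Finset (Fin q)) :
    Finset (Config n q) :=
  univ.filter fun σ => (∀ v, σ v ∈ L v) ∧ ∀ u v, G.Adj u v → σ u ≠ σ v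

/-- Uniform distribution over a finite set of configurations. -/
noncomputable def uniformOn (Ω : Finset (Config n q)) : Config n q → ℝ :=
  fun σ => if σ ∈ Ω then (1 : ℝ) / (Ω.card : ℝ) else 0

/-- The subgraph of `G` induced on `W` (kept on the same vertex type). -/
def restrictG (G : SimpleGraph (Fin n)) (W : Finset (Fin n)) : SimpleGraph (Fin n) where
  Adj u v := G.Adj u v ∧ u ∈ W ∧ v ∈ W
  symm := ⟨fun u v h => ⟨h.1.symm, h.2.2, h.2.1⟩⟩
  loopless := ⟨fun v h => G.irrefl h.1⟩

/-- The vertex set of the connected component of `v` in `G[W]` (empty if `v ∉ W`). -/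
noncomputable def compIn (G : SimpleGraph (Fin n)) (W : Finset (Fin n)) (v : Fin n) :
    Finset (Fin n) :=
  if v ∈ W then univ.filter (fun w => w ∈ W ∧ (restrictG G W).Reachable v w) else ∅


/-! ### Auxiliary machinery for Statement 15 -/

section RDCalc

variable {n q : ℕ}

/-- The mass of the pinning class of `x` on `P` under a density `m`. -/
noncomputable def massOf (m : Config n q → ℝ) (P : Finset (Fin n)) (x : Config n q) : ℝ :=
  ∑ a ∈ univ.filter (fun a : Config n q => ∀ v ∈ P, a v = x v), m a

lemma restrictDist_apply (m : Config n q → ℝ) (P : Finset (Fin n)) (x a : Config n q) :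
    restrictDist m P x a = (if ∀ v ∈ P, a v = x v then m a else 0) / massOf m P x := rfl

lemma massOf_congr {m : Config n q → ℝ} {P : Finset (Fin n)} {x y : Config n q}
    (h : ∀ v ∈ P, x v = y v) : massOf m P x = massOf m P y := by
  unfold massOf
  congr 1
  apply Finset.filter_congr
  intro a _
  exact ⟨fun h' v hv => (h' v hv).trans (h v hv), fun h' v hv => (h' v hv).trans (h v hv).symm⟩

lemma restrictDist_congr {m : Config n q → ℝ} {P : Finset (Fin n)} {x y : Config n q}
    (h : ∀ v ∈ P, x v = y v) : restrictDist m P x = restrictDist m P y := by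
  funext a
  rw [restrictDist_apply, restrictDist_apply, massOf_congr (m := m) h]
  congr 1
  apply if_congr _ rfl rfl
  exact ⟨fun h' v hv => (h' v hv).trans (h v hv), fun h' v hv => (h' v hv).trans (h v hv).symm⟩

lemma restrictDist_nonneg {m : Config n q → ℝ} (hm : ∀ a, 0 ≤ m a)
    {P : Finset (Fin n)} {x : Config n q} (hpos : 0 < massOf m P x) (a : Config n q) :
    0 ≤ restrictDist m P x a := by
  rw [restrictDist_apply]
  apply div_nonneg _ hpos.le
  split <;> simp [hm a]

lemma sum_restrictDist {m : Config n q → ℝ}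
    {P : Finset (Fin n)} {x : Config n q} (hpos : 0 < massOf m P x) :
    ∑ a, restrictDist m P x a = 1 := by
  have : ∑ a, restrictDist m P x a = (∑ a, if ∀ v ∈ P, a v = x v then m a else 0) / massOf m P x := by
    rw [Finset.sum_div]
    rfl
  rw [this, ← Finset.sum_filter]
  exact div_self hpos.ne'

lemma restrictDist_support {m : Config n q → ℝ} {P : Finset (Fin n)} {x a : Config n q}
    (h : restrictDist m P x a ≠ 0) : m a ≠ 0 ∧ ∀ v ∈ P, a v = x v := by
  rw [restrictDist_apply] at h
  have hnum : (if ∀ v ∈ P, a v = x v then m a else 0) ≠ 0 := by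
    intro h0; rw [h0] at h; simp at h
  by_cases hc : ∀ v ∈ P, a v = x v
  · rw [if_pos hc] at hnum; exact ⟨hnum, hc⟩
  · rw [if_neg hc] at hnum; simp at hnum

lemma restrictDist_empty {m : Config n q → ℝ} (h1 : ∑ a, m a = 1) (x : Config n q) :
    restrictDist m ∅ x = m := by
  funext a
  rw [restrictDist_apply]
  have : massOf m ∅ x = 1 := by
    unfold massOf
    rw [Finset.filter_true_of_mem (by simp)]
    exact h1
  simp [this]

/-- Conditional expectation of `h` given the pinning class of `x` on `P`. -/
noncomputable def condE (m : Config n q → ℝ) (P : Finset (Fin n)) (h : Config n q → ℝ)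
    (x : Config n q) : ℝ :=
  expVal (restrictDist m P x) h

lemma condE_apply (m : Config n q → ℝ) (P : Finset (Fin n)) (h : Config n q → ℝ)
    (x : Config n q) : condE m P h x = ∑ a, restrictDist m P x a * h a := rfl

lemma condE_congr {m : Config n q → ℝ} {P : Finset (Fin n)} {x y : Config n q}
    (h : ∀ v ∈ P, x v = y v) (f : Config n q → ℝ) : condE m P f x = condE m P f y := by
  unfold condE expVal
  rw [restrictDist_congr (m := m) h]

lemma condE_const {m : Config n q → ℝ} {P : Finset (Fin n)} {x : Config n q}
    (hpos : 0 < massOf m P x) (c : ℝ) : condE m P (fun _ => c) x = c := by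
  unfold condE expVal
  rw [← Finset.sum_mul, sum_restrictDist hpos, one_mul]

lemma condE_sub_const {m : Config n q → ℝ} {P : Finset (Fin n)} {x : Config n q}
    (hpos : 0 < massOf m P x) (f : Config n q → ℝ) (c : ℝ) :
    condE m P (fun a => f a - c) x = condE m P f x - c := by
  unfold condE expVal
  have : ∀ a, restrictDist m P x a * (f a - c) =
      restrictDist m P x a * f a - restrictDist m P x a * c := fun a => by ring
  calc ∑ a, restrictDist m P x a * (f a - c)
      = ∑ a, (restrictDist m P x a * f a - restrictDist m P x a * c) :=
        Finset.sum_congr rfl fun a _ => this a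
    _ = (∑ a, restrictDist m P x a * f a) - (∑ a, restrictDist m P x a) * c := by
        rw [Finset.sum_sub_distrib, Finset.sum_mul]
    _ = (∑ a, restrictDist m P x a * f a) - c := by rw [sum_restrictDist hpos, one_mul]

end RDCalc

section RDCalc2

variable {n q : ℕ}

lemma ks {m : Config n q → ℝ} {P P' : Finset (Fin n)} (hPP' : P ⊆ P') (σ x a : Config n q) :
    restrictDist m P σ x * restrictDist m P' x a
      = restrictDist m P σ a * restrictDist m P' a x := by
  by_cases hc : ∀ v ∈ P', a v = x v
  · have hsym : ∀ v ∈ P', x v = a v := fun v hv => (hc v hv).symm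
    have h1 : massOf m P' x = massOf m P' a := massOf_congr hsym
    have h2 : (∀ v ∈ P, x v = σ v) ↔ (∀ v ∈ P, a v = σ v) :=
      ⟨fun h v hv => (hc v (hPP' hv)).trans (h v hv),
       fun h v hv => ((hc v (hPP' hv)).symm).trans (h v hv)⟩
    rw [restrictDist_apply m P σ x, restrictDist_apply m P' x a,
      restrictDist_apply m P σ a, restrictDist_apply m P' a x,
      if_pos hc, if_pos hsym, h1]
    by_cases hC : ∀ v ∈ P, a v = σ v
    · rw [if_pos (h2.mpr hC), if_pos hC]; ring
    · rw [if_neg (fun h => hC (h2.mp h)), if_neg hC]; ring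
  · have hcx : ¬ ∀ v ∈ P', x v = a v := fun h => hc (fun v hv => (h v hv).symm)
    rw [restrictDist_apply m P' x a, restrictDist_apply m P' a x, if_neg hc, if_neg hcx]
    simp

lemma condE_selfadj {m : Config n q → ℝ} {P P' : Finset (Fin n)} (hPP' : P ⊆ P')
    (σ : Config n q) (u v : Config n q → ℝ) :
    ∑ x, restrictDist m P σ x * (u x * condE m P' v x)
      = ∑ x, restrictDist m P σ x * (condE m P' u x * v x) := by
  have key : ∀ w z : Config n q → ℝ,
      ∑ x, restrictDist m P σ x * (w x * condE m P' z x)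
        = ∑ x, ∑ a, (restrictDist m P σ x * restrictDist m P' x a) * (w x * z a) := by
    intro w z
    refine Finset.sum_congr rfl fun x _ => ?_
    rw [condE_apply, Finset.mul_sum]
    rw [Finset.mul_sum]
    refine Finset.sum_congr rfl fun a _ => by ring
  calc ∑ x, restrictDist m P σ x * (u x * condE m P' v x)
      = ∑ x, ∑ a, (restrictDist m P σ x * restrictDist m P' x a) * (u x * v a) := key u v
    _ = ∑ a, ∑ x, (restrictDist m P σ x * restrictDist m P' x a) * (u x * v a) :=
        Finset.sum_comm
    _ = ∑ a, ∑ x, (restrictDist m P σ a * restrictDist m P' a x) * (v a * u x) := by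
        refine Finset.sum_congr rfl fun a _ => Finset.sum_congr rfl fun x _ => ?_
        rw [ks hPP' σ x a]; ring
    _ = ∑ a, restrictDist m P σ a * (condE m P' u a * v a) := by
        refine Finset.sum_congr rfl fun a _ => ?_
        rw [condE_apply, Finset.sum_mul, Finset.mul_sum]
        refine Finset.sum_congr rfl fun x _ => by ring

lemma condE_stationary {m : Config n q → ℝ} {P P' : Finset (Fin n)} (hPP' : P ⊆ P')
    (hpos' : ∀ x : Config n q, 0 < massOf m P' x) (σ : Config n q) (v : Config n q → ℝ) :
    ∑ x, restrictDist m P σ x * condE m P' v x = ∑ x, restrictDist m P σ x * v x := by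
  have hone : condE m P' (fun _ => (1:ℝ)) = fun _ => (1:ℝ) :=
    funext fun x => condE_const (hpos' x) 1
  have := condE_selfadj (m := m) hPP' σ (fun _ => (1:ℝ)) v
  rw [hone] at this
  simpa using this

/-- `h` depends only on the coordinates in `P`. -/
def DepOn (P : Finset (Fin n)) (h : Config n q → ℝ) : Prop :=
  ∀ a b : Config n q, (∀ v ∈ P, a v = b v) → h a = h b

lemma condE_depOn (m : Config n q → ℝ) (P : Finset (Fin n)) (f : Config n q → ℝ) :
    DepOn P (condE m P f) := fun a b hab => condE_congr hab f

lemma condE_of_depOn {m : Config n q → ℝ} {P' : Finset (Fin n)}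
    (hpos' : ∀ x : Config n q, 0 < massOf m P' x) {h : Config n q → ℝ}
    (hd : DepOn P' h) (x : Config n q) : condE m P' h x = h x := by
  rw [condE_apply]
  have step : ∀ a, restrictDist m P' x a * h a = restrictDist m P' x a * h x := by
    intro a
    by_cases h0 : restrictDist m P' x a = 0
    · rw [h0]; ring
    · rcases restrictDist_support h0 with ⟨-, hagree⟩
      rw [hd a x hagree]
  rw [Finset.sum_congr rfl fun a _ => step a, ← Finset.sum_mul, sum_restrictDist (hpos' x),
    one_mul]

lemma condE_extract {m : Config n q → ℝ} {P P' : Finset (Fin n)} (hPP' : P ⊆ P')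
    (hpos' : ∀ x : Config n q, 0 < massOf m P' x) (σ : Config n q)
    (f G : Config n q → ℝ) (hG : DepOn P' G) :
    ∑ x, restrictDist m P σ x * (condE m P' f x * G x)
      = ∑ x, restrictDist m P σ x * (f x * G x) := by
  have h1 := condE_selfadj (m := m) hPP' σ G f
  have h2 : ∀ x, condE m P' G x = G x := condE_of_depOn hpos' hG
  calc ∑ x, restrictDist m P σ x * (condE m P' f x * G x)
      = ∑ x, restrictDist m P σ x * (G x * condE m P' f x) := by
        refine Finset.sum_congr rfl fun x _ => by ring
    _ = ∑ x, restrictDist m P σ x * (condE m P' G x * f x) := h1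
    _ = ∑ x, restrictDist m P σ x * (f x * G x) := by
        refine Finset.sum_congr rfl fun x _ => by rw [h2 x]; ring

lemma varD_nonneg {D f : Config n q → ℝ} (hD : ∀ a, 0 ≤ D a) : 0 ≤ varD D f := by
  unfold varD expVal
  exact Finset.sum_nonneg fun a _ => mul_nonneg (hD a) (sq_nonneg _)

lemma varD_restrict_eq {m : Config n q → ℝ} {P' : Finset (Fin n)} (g : Config n q → ℝ)
    (x : Config n q) :
    varD (restrictDist m P' x) g
      = condE m P' (fun a => (g a - condE m P' g a) ^ 2) x := by
  unfold varD
  rw [condE_apply]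
  unfold expVal
  refine Finset.sum_congr rfl fun a _ => ?_
  by_cases h0 : restrictDist m P' x a = 0
  · rw [h0]; ring
  · rcases restrictDist_support h0 with ⟨-, hagree⟩
    have : condE m P' g a = condE m P' g x := condE_congr hagree g
    rw [this]
    rfl

lemma ltv_point {m : Config n q → ℝ} {P P' : Finset (Fin n)} (hPP' : P ⊆ P')
    (hpos : ∀ x : Config n q, 0 < massOf m P x)
    (hpos' : ∀ x : Config n q, 0 < massOf m P' x) (σ : Config n q) (f : Config n q → ℝ) :
    varD (restrictDist m P σ) f
      = (∑ x, restrictDist m P σ x * varD (restrictDist m P' x) f)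
        + varD (restrictDist m P σ) (condE m P' f) := by
  set F := condE m P' f with hF
  set e : ℝ := expVal (restrictDist m P σ) f with he
  have he' : expVal (restrictDist m P σ) F = e := by
    rw [he]; unfold expVal
    exact condE_stationary hPP' hpos' σ f
  have hterm1 : ∑ x, restrictDist m P σ x * varD (restrictDist m P' x) f
      = ∑ x, restrictDist m P σ x * (f x - F x) ^ 2 := by
    calc ∑ x, restrictDist m P σ x * varD (restrictDist m P' x) f
        = ∑ x, restrictDist m P σ x * condE m P' (fun a => (f a - F a) ^ 2) x := by
          refine Finset.sum_congr rfl fun x _ => ?_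
          rw [varD_restrict_eq]
      _ = ∑ x, restrictDist m P σ x * (f x - F x) ^ 2 :=
          condE_stationary hPP' hpos' σ _
  have hcross : ∑ x, restrictDist m P σ x * ((f x - F x) * (F x - e)) = 0 := by
    have hGdep : DepOn P' (fun x => F x - e) := by
      intro a b hab
      simp only [hF]
      rw [condE_congr hab f]
    have hx := condE_extract hPP' hpos' σ f (fun x => F x - e) hGdep
    have : ∑ x, restrictDist m P σ x * ((f x - F x) * (F x - e))
        = (∑ x, restrictDist m P σ x * (f x * (F x - e)))
          - ∑ x, restrictDist m P σ x * (F x * (F x - e)) := by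
      rw [← Finset.sum_sub_distrib]
      refine Finset.sum_congr rfl fun x _ => by ring
    rw [this, ← hx]
    exact sub_self _
  have hexp : varD (restrictDist m P σ) f
      = (∑ x, restrictDist m P σ x * (f x - F x) ^ 2)
        + 2 * (∑ x, restrictDist m P σ x * ((f x - F x) * (F x - e)))
        + ∑ x, restrictDist m P σ x * (F x - e) ^ 2 := by
    unfold varD
    rw [← he]
    unfold expVal
    rw [Finset.mul_sum, ← Finset.sum_add_distrib, ← Finset.sum_add_distrib]
    refine Finset.sum_congr rfl fun x _ => ?_
    show restrictDist m P σ x * (f x - e) ^ 2 = _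
    ring
  have hvarF : varD (restrictDist m P σ) F = ∑ x, restrictDist m P σ x * (F x - e) ^ 2 := by
    unfold varD
    rw [he']
    unfold expVal
    exact Finset.sum_congr rfl fun x _ => rfl
  rw [hexp, hcross, hterm1, hvarF]
  ring

end RDCalc2

section HardcoreFacts

variable {n : ℕ}

lemma hcWeight_nonneg {G : SimpleGraph (Fin n)} {lam : ℝ} (hlam : 0 ≤ lam) (σ : Config n 2) :
    0 ≤ hcWeight G lam σ := by
  unfold hcWeight
  split
  · exact pow_nonneg hlam _
  · exact le_refl 0

lemma hcWeight_pos_of_subset {G : SimpleGraph (Fin n)} {VL : Finset (Fin n)}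
    (hbip : Bipartite G VL) {lam : ℝ} (hlam : 0 < lam) {σ : Config n 2}
    (hσ : ∀ v, σ v = 1 → v ∈ VL) : 0 < hcWeight G lam σ := by
  unfold hcWeight
  rw [if_pos]
  · exact pow_pos hlam _
  · intro u v huv h
    have hu := hσ u h.1
    have hv := hσ v h.2
    exact ((hbip u v huv).mp hu) hv

lemma sum_hcWeight_pos {G : SimpleGraph (Fin n)} {VL : Finset (Fin n)}
    (hbip : Bipartite G VL) {lam : ℝ} (hlam : 0 < lam) :
    0 < ∑ σ : Config n 2, hcWeight G lam σ := by
  refine Finset.sum_pos' (fun σ _ => hcWeight_nonneg hlam.le σ) ?_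
  refine ⟨fun _ => 0, Finset.mem_univ _, ?_⟩
  refine hcWeight_pos_of_subset hbip hlam fun v hv => ?_
  simp at hv

lemma hardcoreDist_nonneg {G : SimpleGraph (Fin n)} {VL : Finset (Fin n)}
    (hbip : Bipartite G VL) {lam : ℝ} (hlam : 0 < lam) (σ : Config n 2) :
    0 ≤ hardcoreDist G lam σ :=
  div_nonneg (hcWeight_nonneg hlam.le σ) (sum_hcWeight_pos hbip hlam).le

lemma sum_hardcoreDist {G : SimpleGraph (Fin n)} {VL : Finset (Fin n)}
    (hbip : Bipartite G VL) {lam : ℝ} (hlam : 0 < lam) :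
    ∑ σ : Config n 2, hardcoreDist G lam σ = 1 := by
  unfold hardcoreDist
  rw [← Finset.sum_div]
  exact div_self (sum_hcWeight_pos hbip hlam).ne'

lemma hardcoreDist_pos_of_subset {G : SimpleGraph (Fin n)} {VL : Finset (Fin n)}
    (hbip : Bipartite G VL) {lam : ℝ} (hlam : 0 < lam) {σ : Config n 2}
    (hσ : ∀ v, σ v = 1 → v ∈ VL) : 0 < hardcoreDist G lam σ :=
  div_pos (hcWeight_pos_of_subset hbip hlam hσ) (sum_hcWeight_pos hbip hlam)

/-- The canonical representative of the pinning class of `x` on `P`. -/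
def pinRep (P : Finset (Fin n)) (x : Config n 2) : Config n 2 :=
  fun v => if v ∈ P then x v else 0

lemma massOf_hardcore_pos {G : SimpleGraph (Fin n)} {VL : Finset (Fin n)}
    (hbip : Bipartite G VL) {lam : ℝ} (hlam : 0 < lam) {P : Finset (Fin n)}
    (hP : P ⊆ VL) (x : Config n 2) : 0 < massOf (hardcoreDist G lam) P x := by
  unfold massOf
  refine Finset.sum_pos' (fun a _ => hardcoreDist_nonneg hbip hlam a) ?_
  refine ⟨pinRep P x, ?_, ?_⟩
  · simp only [Finset.mem_filter, Finset.mem_univ, true_and]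
    intro v hv
    simp [pinRep, hv]
  · refine hardcoreDist_pos_of_subset hbip hlam fun v hv => ?_
    by_cases hvP : v ∈ P
    · exact hP hvP
    · simp [pinRep, hvP] at hv

lemma marginalOn_eq_massOf (m : Config n 2 → ℝ) (W : Finset (Fin n)) (σ : Config n 2) :
    marginalOn m W σ = if ∀ v, v ∉ W → σ v = 0 then massOf m W σ else 0 := rfl

lemma marginalOn_nonneg {m : Config n 2 → ℝ} (hm : ∀ a, 0 ≤ m a) (W : Finset (Fin n))
    (σ : Config n 2) : 0 ≤ marginalOn m W σ := by
  rw [marginalOn_eq_massOf]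
  split
  · exact Finset.sum_nonneg fun a _ => hm a
  · exact le_refl 0

lemma marginalOn_support {m : Config n 2 → ℝ} {W : Finset (Fin n)} {σ : Config n 2}
    (h : marginalOn m W σ ≠ 0) : ∀ v, v ∉ W → σ v = 0 := by
  rw [marginalOn_eq_massOf] at h
  by_cases hc : ∀ v, v ∉ W → σ v = 0
  · exact hc
  · exact absurd rfl (by rwa [if_neg hc] at h)

/-- Zero out the coordinates outside `W`. -/
def zeroOut (W : Finset (Fin n)) (a : Config n 2) : Config n 2 :=
  fun v => if v ∈ W then a v else 0

lemma marg_transfer (m : Config n 2 → ℝ) (W : Finset (Fin n)) (h : Config n 2 → ℝ)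
    (hdep : DepOn W h) :
    ∑ x, marginalOn m W x * h x = ∑ x, m x * h x := by
  have hfib := Finset.sum_fiberwise_of_maps_to
    (s := (univ : Finset (Config n 2))) (t := (univ : Finset (Config n 2)))
    (g := zeroOut W) (fun x _ => Finset.mem_univ _) (fun x => m x * h x)
  rw [← hfib]
  refine Finset.sum_congr rfl fun y _ => ?_
  by_cases hy : ∀ v, v ∉ W → y v = 0
  · have hyy : zeroOut W y = y := by
      funext v
      by_cases hv : v ∈ W <;> simp [zeroOut, hv, hy]
    have hset : (univ.filter fun a : Config n 2 => zeroOut W a = y)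
        = univ.filter fun a : Config n 2 => ∀ v ∈ W, a v = y v := by
      apply Finset.filter_congr
      intro a _
      constructor
      · intro he v hv
        rw [← he]
        simp [zeroOut, hv]
      · intro ha
        funext v
        by_cases hv : v ∈ W
        · simp [zeroOut, hv, ha v hv]
        · simp [zeroOut, hv, hy v hv]
    have : ∀ a ∈ univ.filter fun a : Config n 2 => zeroOut W a = y,
        m a * h a = m a * h y := by
      intro a ha
      simp only [Finset.mem_filter] at ha
      have : ∀ v ∈ W, a v = y v := by
        intro v hv
        rw [← ha.2]
        simp [zeroOut, hv]
      rw [hdep a y this]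
    rw [Finset.sum_congr rfl this, ← Finset.sum_mul, marginalOn_eq_massOf, if_pos hy]
    unfold massOf
    rw [hset]
  · have hfe : (univ.filter fun a : Config n 2 => zeroOut W a = y) = ∅ := by
      rw [Finset.filter_eq_empty_iff]
      intro a _
      intro he
      apply hy
      intro v hv
      rw [← he]
      simp [zeroOut, hv]
    rw [hfe, marginalOn_eq_massOf, if_neg hy]
    simp

end HardcoreFacts

section GeomGap

lemma geom_gap {a : ℕ → ℝ} (ha : ∀ t, 0 ≤ a t)
    (hlc : ∀ t : ℕ, 1 ≤ t → a t ^ 2 ≤ a (t - 1) * a (t + 1))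
    {C γ : ℝ} (hγ : 0 < γ) (hd : ∀ t, a t ≤ C * γ ^ t) :
    a 1 ≤ γ * a 0 := by
  by_contra hcon
  push_neg at hcon
  have ha0 : 0 < a 0 := by
    rcases (ha 0).lt_or_eq with h | h
    · exact h
    · exfalso
      have h1 := hlc 1 le_rfl
      norm_num [← h] at h1
      have ha1 : a 1 = 0 := by
        have := sq_nonneg (a 1)
        nlinarith
      rw [ha1, ← h, mul_zero] at hcon
      exact lt_irrefl 0 hcon
  have hstep : ∀ t, a 1 * a t ≤ a 0 * a (t + 1) := by
    intro t
    induction t with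
    | zero => rw [mul_comm]
    | succ t iht =>
      rcases (ha (t + 1)).lt_or_eq with hpos | hzero
      · have h1 := hlc (t + 1) (Nat.le_add_left 1 t)
        simp only [Nat.add_sub_cancel] at h1
        have key : (a 1 * a (t + 1)) * a (t + 1) ≤ (a 0 * a (t + 2)) * a (t + 1) := by
          have e1 : (a 1 * a (t + 1)) * a (t + 1) = a 1 * a (t + 1) ^ 2 := by ring
          have e2 : a 1 * a (t + 1) ^ 2 ≤ a 1 * (a t * a (t + 2)) :=
            mul_le_mul_of_nonneg_left h1 (ha 1)
          have e3 : a 1 * (a t * a (t + 2)) = (a 1 * a t) * a (t + 2) := by ring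
          have e4 : (a 1 * a t) * a (t + 2) ≤ (a 0 * a (t + 1)) * a (t + 2) :=
            mul_le_mul_of_nonneg_right iht (ha (t + 2))
          calc (a 1 * a (t + 1)) * a (t + 1) = a 1 * a (t + 1) ^ 2 := e1
            _ ≤ a 1 * (a t * a (t + 2)) := e2
            _ = (a 1 * a t) * a (t + 2) := e3
            _ ≤ (a 0 * a (t + 1)) * a (t + 2) := e4
            _ = (a 0 * a (t + 2)) * a (t + 1) := by ring
        exact le_of_mul_le_mul_right key hpos
      · rw [← hzero, mul_zero]
        exact mul_nonneg (ha 0) (ha (t + 2))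
  set r : ℝ := a 1 / a 0 with hr
  have hrγ : γ < r := (lt_div_iff₀ ha0).mpr (by rw [mul_comm] at hcon ⊢; exact hcon)
  have hr0 : 0 ≤ r := le_trans hγ.le hrγ.le
  have hgrow : ∀ t, a 0 * r ^ t ≤ a t := by
    intro t
    induction t with
    | zero => simp
    | succ t iht =>
      have : a 0 * r ^ (t + 1) = (a 0 * r ^ t) * r := by ring
      rw [this]
      calc (a 0 * r ^ t) * r ≤ a t * r := mul_le_mul_of_nonneg_right iht hr0
        _ = a 1 * a t / a 0 := by rw [hr]; ring
        _ ≤ a 0 * a (t + 1) / a 0 := by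
            have h := hstep t
            gcongr
        _ = a (t + 1) := by field_simp
  have hbound : ∀ t : ℕ, (r / γ) ^ t ≤ C / a 0 := by
    intro t
    have h1 : a 0 * r ^ t ≤ C * γ ^ t := le_trans (hgrow t) (hd t)
    have hγt : (0:ℝ) < γ ^ t := pow_pos hγ t
    rw [div_pow, div_le_div_iff₀ hγt ha0]
    calc r ^ t * a 0 = a 0 * r ^ t := by ring
      _ ≤ C * γ ^ t := h1
      _ = C * γ ^ t := rfl
    
  have hone : 1 < r / γ := (one_lt_div hγ).mpr hrγ
  obtain ⟨t, ht⟩ := pow_unbounded_of_one_lt (C / a 0) hone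
  exact absurd (hbound t) (not_le.mpr ht)

end GeomGap

section GapInfra

variable {n q : ℕ}

lemma condE_add_mul (m : Config n q → ℝ) (P : Finset (Fin n)) (u v : Config n q → ℝ)
    (c : ℝ) (x : Config n q) :
    condE m P (fun a => u a + c * v a) x = condE m P u x + c * condE m P v x := by
  simp only [condE_apply]
  rw [Finset.mul_sum, ← Finset.sum_add_distrib]
  refine Finset.sum_congr rfl fun a _ => by ring

lemma condE_sq {m : Config n q → ℝ} {P P' : Finset (Fin n)} (hPP' : P ⊆ P')
    (hpos' : ∀ x : Config n q, 0 < massOf m P' x) (σ : Config n q) (u : Config n q → ℝ) :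
    ∑ x, restrictDist m P σ x * (u x * condE m P' u x)
      = ∑ x, restrictDist m P σ x * (condE m P' u x * condE m P' u x) := by
  have hfix : condE m P' (condE m P' u) = condE m P' u :=
    funext fun x => condE_of_depOn hpos' (condE_depOn m P' u) x
  have h2 := condE_selfadj (m := m) hPP' σ u (condE m P' u)
  rwa [hfix] at h2

lemma avg_condVar_eq {m : Config n q → ℝ} {P P' : Finset (Fin n)} (hPP' : P ⊆ P')
    (hpos' : ∀ x : Config n q, 0 < massOf m P' x) (σ : Config n q) (g : Config n q → ℝ) :
    ∑ x, restrictDist m P σ x * varD (restrictDist m P' x) g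
      = ∑ x, restrictDist m P σ x *
          ((g x - condE m P' g x) * (g x - condE m P' g x)) := by
  calc ∑ x, restrictDist m P σ x * varD (restrictDist m P' x) g
      = ∑ x, restrictDist m P σ x * condE m P' (fun a => (g a - condE m P' g a) ^ 2) x := by
        refine Finset.sum_congr rfl fun x _ => ?_
        rw [varD_restrict_eq]
    _ = ∑ x, restrictDist m P σ x * (g x - condE m P' g x) ^ 2 :=
        condE_stationary hPP' hpos' σ _
    _ = ∑ x, restrictDist m P σ x * ((g x - condE m P' g x) * (g x - condE m P' g x)) := by
        refine Finset.sum_congr rfl fun x _ => by ring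

lemma hamW_self (ρ : Fin n → ℕ) (x : Config n q) : hamW ρ x x = 0 := by
  unfold hamW
  rw [Finset.filter_false_of_mem (by intro v _; simp)]
  simp

lemma hamW_nonneg (ρ : Fin n → ℕ) (x y : Config n q) : 0 ≤ hamW ρ x y :=
  Finset.sum_nonneg fun v _ => Nat.cast_nonneg _

lemma hamW_ge_one {ρ : Fin n → ℕ} (hρ : ∀ v, 0 < ρ v) {x y : Config n q} (hxy : x ≠ y) :
    1 ≤ hamW ρ x y := by
  obtain ⟨v, hv⟩ := Function.ne_iff.mp hxy
  have hmem : v ∈ univ.filter fun v => x v ≠ y v := by simp [hv]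
  have h2 : (ρ v : ℝ) ≤ ∑ u ∈ univ.filter (fun u => x u ≠ y u), (ρ u : ℝ) :=
    Finset.single_le_sum (f := fun u => (ρ u : ℝ)) (fun u _ => Nat.cast_nonneg (ρ u)) hmem
  calc (1:ℝ) ≤ (ρ v : ℝ) := by exact_mod_cast hρ v
    _ ≤ hamW ρ x y := h2

lemma hamW_le_total (ρ : Fin n → ℕ) (x y : Config n q) :
    hamW ρ x y ≤ ∑ v : Fin n, (ρ v : ℝ) :=
  Finset.sum_le_sum_of_subset_of_nonneg (Finset.filter_subset _ _)
    fun v _ _ => Nat.cast_nonneg (ρ v)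

lemma hamW_update_split {ρ : Fin n → ℕ} {x y : Config n q} {v₀ : Fin n}
    (hne : x v₀ ≠ y v₀) :
    hamW ρ x y = (ρ v₀ : ℝ) + hamW ρ (Function.update x v₀ (y v₀)) y := by
  unfold hamW
  have hset : (univ.filter fun v => Function.update x v₀ (y v₀) v ≠ y v)
      = (univ.filter fun v => x v ≠ y v).erase v₀ := by
    ext v
    by_cases hv : v = v₀
    · subst hv
      simp [Function.update_self]
    · simp [Function.update_of_ne hv, hv]
  rw [hset]
  have hmem : v₀ ∈ univ.filter fun v => x v ≠ y v := by simp [hne]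
  exact (Finset.add_sum_erase _ _ hmem).symm

/-- Configurations agreeing with `σ₀` on `P₀` and vanishing outside `VL`. -/
def Sgood (VL P₀ : Finset (Fin n)) (σ₀ : Config n 2) : Finset (Config n 2) :=
  univ.filter fun x => (∀ v ∈ P₀, x v = σ₀ v) ∧ ∀ v, v ∉ VL → x v = 0

lemma mem_Sgood {VL P₀ : Finset (Fin n)} {σ₀ x : Config n 2} :
    x ∈ Sgood VL P₀ σ₀ ↔ (∀ v ∈ P₀, x v = σ₀ v) ∧ ∀ v, v ∉ VL → x v = 0 := by
  unfold Sgood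
  simp

lemma pinRep_mem_Sgood {VL P₀ : Finset (Fin n)} (hP₀ : P₀ ⊆ VL) (σ₀ : Config n 2) :
    pinRep P₀ σ₀ ∈ Sgood VL P₀ σ₀ := by
  rw [mem_Sgood]
  constructor
  · intro v hv; simp [pinRep, hv]
  · intro v hv
    have : v ∉ P₀ := fun h => hv (hP₀ h)
    simp [pinRep, this]

lemma restrict_support_Sgood {ν : Config n 2 → ℝ} {VL P₀ P' : Finset (Fin n)}
    (hsupp : ∀ x : Config n 2, ν x ≠ 0 → ∀ v, v ∉ VL → x v = 0)
    (hP₀P' : P₀ ⊆ P') {σ₀ x a : Config n 2} (hx : x ∈ Sgood VL P₀ σ₀)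
    (ha : restrictDist ν P' x a ≠ 0) : a ∈ Sgood VL P₀ σ₀ := by
  rcases restrictDist_support ha with ⟨hν, hagree⟩
  rw [mem_Sgood] at hx ⊢
  constructor
  · intro v hv
    rw [hagree v (hP₀P' hv)]
    exact hx.1 v hv
  · exact hsupp a hν

end GapInfra

section KopSection

variable {n k : ℕ}

/-- The averaged block heat-bath operator. -/
noncomputable def Kop (ν : Config n 2 → ℝ) (VL : Finset (Fin n))
    (U : Fin k → Finset (Fin n)) (J : Finset (Fin k)) (h : Config n 2 → ℝ) :
    Config n 2 → ℝ :=
  fun x => (J.card : ℝ)⁻¹ * ∑ i ∈ J, condE ν (VL \ unionBlocks U (J.erase i)) h x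

lemma P0_subset_Pi (VL : Finset (Fin n)) (U : Fin k → Finset (Fin n)) (J : Finset (Fin k))
    (i : Fin k) : VL \ unionBlocks U J ⊆ VL \ unionBlocks U (J.erase i) := by
  apply Finset.sdiff_subset_sdiff (Finset.Subset.refl VL)
  unfold unionBlocks
  exact Finset.biUnion_subset_biUnion_of_subset_left U (Finset.erase_subset _ _)

lemma Kop_adj {ν : Config n 2 → ℝ} {VL : Finset (Fin n)}
    {U : Fin k → Finset (Fin n)} {ρ : Fin n → ℕ} {M : ℕ} {J : Finset (Fin k)} {σ₀ : Config n 2}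
    (hsupp : ∀ x : Config n 2, ν x ≠ 0 → ∀ v, v ∉ VL → x v = 0)
    (hdisj : ∀ i j, i ≠ j → Disjoint (U i) (U j))
    (hCI : ∀ P : Finset (Fin n), P ⊆ VL → ∀ v₀ ∈ P, ∀ σ₁ σ₂ : Config n 2,
      σ₁ v₀ ≠ σ₂ v₀ → (∀ v ∈ P, v ≠ v₀ → σ₁ v = σ₂ v) →
      ∃ π, IsCoupling (restrictDist ν P σ₁) (restrictDist ν P σ₂) π ∧
        expHam π ρ ≤ (M : ℝ) * (ρ v₀ : ℝ))
    {h : Config n 2 → ℝ} {L : ℝ} (hL0 : 0 ≤ L)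
    (hLip : ∀ a ∈ Sgood VL (VL \ unionBlocks U J) σ₀,
      ∀ b ∈ Sgood VL (VL \ unionBlocks U J) σ₀, |h a - h b| ≤ L * hamW ρ a b)
    {x y : Config n 2} (hx : x ∈ Sgood VL (VL \ unionBlocks U J) σ₀)
    (hy : y ∈ Sgood VL (VL \ unionBlocks U J) σ₀)
    {v₀ : Fin n} (hne : x v₀ ≠ y v₀) (hagr : ∀ v, v ≠ v₀ → x v = y v) :
    |Kop ν VL U J h x - Kop ν VL U J h y|
      ≤ (J.card : ℝ)⁻¹ * ((M : ℝ) * (L * (ρ v₀ : ℝ))) := by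
  have hx' := mem_Sgood.mp hx
  have hy' := mem_Sgood.mp hy
  have hv₀VL : v₀ ∈ VL := by
    by_contra hvn
    exact hne ((hx'.2 v₀ hvn).trans (hy'.2 v₀ hvn).symm)
  have hv₀P₀ : v₀ ∉ VL \ unionBlocks U J := by
    intro hmem
    exact hne ((hx'.1 v₀ hmem).trans (hy'.1 v₀ hmem).symm)
  have hv₀UJ : v₀ ∈ unionBlocks U J := by
    by_contra hcon
    exact hv₀P₀ (Finset.mem_sdiff.mpr ⟨hv₀VL, hcon⟩)
  unfold unionBlocks at hv₀UJ
  obtain ⟨i₀, hi₀J, hv₀U⟩ := Finset.mem_biUnion.mp hv₀UJ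
  have hzero : ∀ i ∈ J, i ≠ i₀ →
      condE ν (VL \ unionBlocks U (J.erase i)) h x
        = condE ν (VL \ unionBlocks U (J.erase i)) h y := by
    intro i hiJ hii
    apply condE_congr
    intro v hv
    apply hagr
    intro hveq
    subst hveq
    have hmem : v ∈ unionBlocks U (J.erase i) := by
      unfold unionBlocks
      exact Finset.mem_biUnion.mpr ⟨i₀, Finset.mem_erase.mpr ⟨Ne.symm hii, hi₀J⟩, hv₀U⟩
    exact (Finset.mem_sdiff.mp hv).2 hmem
  have hdiff : Kop ν VL U J h x - Kop ν VL U J h y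
      = (J.card : ℝ)⁻¹ * (condE ν (VL \ unionBlocks U (J.erase i₀)) h x
          - condE ν (VL \ unionBlocks U (J.erase i₀)) h y) := by
    unfold Kop
    rw [← mul_sub, ← Finset.sum_sub_distrib]
    congr 1
    refine Finset.sum_eq_single_of_mem i₀ hi₀J ?_
    intro i hiJ hii
    rw [hzero i hiJ hii, sub_self]
  set P' := VL \ unionBlocks U (J.erase i₀) with hP'
  have hP'VL : P' ⊆ VL := Finset.sdiff_subset
  have hP₀P' : VL \ unionBlocks U J ⊆ P' := P0_subset_Pi VL U J i₀
  have hv₀Pi : v₀ ∈ P' := by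
    rw [hP', Finset.mem_sdiff]
    refine ⟨hv₀VL, ?_⟩
    intro hmem
    unfold unionBlocks at hmem
    obtain ⟨i', hi', hv'⟩ := Finset.mem_biUnion.mp hmem
    have hne' : i' ≠ i₀ := (Finset.mem_erase.mp hi').1
    exact Finset.disjoint_left.mp (hdisj i' i₀ hne') hv' hv₀U
  obtain ⟨π, hπ, hham⟩ := hCI P' hP'VL v₀ hv₀Pi x y hne (fun v _ hv => hagr v hv)
  have hmarg1 : ∀ a, ∑ b, π a b = restrictDist ν P' x a := hπ.fst_marginal
  have hmarg2 : ∀ b, ∑ a, π a b = restrictDist ν P' y b := hπ.snd_marginal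
  have hsupp2 : ∀ a b, π a b ≠ 0 →
      a ∈ Sgood VL (VL \ unionBlocks U J) σ₀ ∧ b ∈ Sgood VL (VL \ unionBlocks U J) σ₀ := by
    intro a b hab
    have ha' : restrictDist ν P' x a ≠ 0 := by
      intro h0
      have hs : ∑ b', π a b' = 0 := by rw [hmarg1 a, h0]
      exact hab ((Finset.sum_eq_zero_iff_of_nonneg
        (fun b' _ => hπ.nonneg a b')).mp hs b (Finset.mem_univ b))
    have hb' : restrictDist ν P' y b ≠ 0 := by
      intro h0
      have hs : ∑ a', π a' b = 0 := by rw [hmarg2 b, h0]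
      exact hab ((Finset.sum_eq_zero_iff_of_nonneg
        (fun a' _ => hπ.nonneg a' b)).mp hs a (Finset.mem_univ a))
    exact ⟨restrict_support_Sgood hsupp hP₀P' hx ha',
      restrict_support_Sgood hsupp hP₀P' hy hb'⟩
  have hEdiff : condE ν P' h x - condE ν P' h y = ∑ a, ∑ b, π a b * (h a - h b) := by
    rw [condE_apply, condE_apply]
    have h1 : ∑ a, restrictDist ν P' x a * h a = ∑ a, ∑ b, π a b * h a := by
      refine Finset.sum_congr rfl fun a _ => ?_
      rw [← hmarg1 a, Finset.sum_mul]
    have h2 : ∑ b, restrictDist ν P' y b * h b = ∑ b, ∑ a, π a b * h b := by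
      refine Finset.sum_congr rfl fun b _ => ?_
      rw [← hmarg2 b, Finset.sum_mul]
    have h2' : ∑ b, ∑ a, π a b * h b = ∑ a, ∑ b, (π a b * h b : ℝ) := Finset.sum_comm
    rw [h1, h2, h2', ← Finset.sum_sub_distrib]
    refine Finset.sum_congr rfl fun a _ => ?_
    rw [← Finset.sum_sub_distrib]
    refine Finset.sum_congr rfl fun b _ => by ring
  have habs : |∑ a, ∑ b, π a b * (h a - h b)| ≤ (M : ℝ) * (L * (ρ v₀ : ℝ)) := by
    have step1 : |∑ a, ∑ b, π a b * (h a - h b)| ≤ ∑ a, ∑ b, |π a b * (h a - h b)| := by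
      calc |∑ a, ∑ b, π a b * (h a - h b)| ≤ ∑ a, |∑ b, π a b * (h a - h b)| :=
            Finset.abs_sum_le_sum_abs _ _
        _ ≤ ∑ a, ∑ b, |π a b * (h a - h b)| :=
            Finset.sum_le_sum fun a _ => Finset.abs_sum_le_sum_abs _ _
    have step2 : ∑ a, ∑ b, |π a b * (h a - h b)|
        ≤ ∑ a, ∑ b, π a b * (L * hamW ρ a b) := by
      refine Finset.sum_le_sum fun a _ => Finset.sum_le_sum fun b _ => ?_
      rcases eq_or_ne (π a b) 0 with h0 | h0
      · rw [h0]
        simp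
      · obtain ⟨haS, hbS⟩ := hsupp2 a b h0
        rw [abs_mul, abs_of_nonneg (hπ.nonneg a b)]
        exact mul_le_mul_of_nonneg_left (hLip a haS b hbS) (hπ.nonneg a b)
    have step3 : ∑ a, ∑ b, π a b * (L * hamW ρ a b) = L * expHam π ρ := by
      unfold expHam
      rw [Finset.mul_sum]
      refine Finset.sum_congr rfl fun a _ => ?_
      rw [Finset.mul_sum]
      refine Finset.sum_congr rfl fun b _ => by ring
    have step4 : L * expHam π ρ ≤ L * ((M : ℝ) * (ρ v₀ : ℝ)) :=
      mul_le_mul_of_nonneg_left hham hL0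
    calc |∑ a, ∑ b, π a b * (h a - h b)| ≤ ∑ a, ∑ b, |π a b * (h a - h b)| := step1
      _ ≤ ∑ a, ∑ b, π a b * (L * hamW ρ a b) := step2
      _ = L * expHam π ρ := step3
      _ ≤ L * ((M : ℝ) * (ρ v₀ : ℝ)) := step4
      _ = (M : ℝ) * (L * (ρ v₀ : ℝ)) := by ring
  rw [hdiff, abs_mul, abs_inv, Nat.abs_cast]
  refine mul_le_mul_of_nonneg_left ?_ (inv_nonneg.mpr (Nat.cast_nonneg _))
  rw [hEdiff]
  exact habs

end KopSection

section KopLip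

variable {n k : ℕ}

lemma Kop_lip {ν : Config n 2 → ℝ} {VL : Finset (Fin n)}
    {U : Fin k → Finset (Fin n)} {ρ : Fin n → ℕ} {M : ℕ} {J : Finset (Fin k)} {σ₀ : Config n 2}
    (hsupp : ∀ x : Config n 2, ν x ≠ 0 → ∀ v, v ∉ VL → x v = 0)
    (hdisj : ∀ i j, i ≠ j → Disjoint (U i) (U j))
    (hCI : ∀ P : Finset (Fin n), P ⊆ VL → ∀ v₀ ∈ P, ∀ σ₁ σ₂ : Config n 2,
      σ₁ v₀ ≠ σ₂ v₀ → (∀ v ∈ P, v ≠ v₀ → σ₁ v = σ₂ v) →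
      ∃ π, IsCoupling (restrictDist ν P σ₁) (restrictDist ν P σ₂) π ∧
        expHam π ρ ≤ (M : ℝ) * (ρ v₀ : ℝ))
    {h : Config n 2 → ℝ} {L : ℝ} (hL0 : 0 ≤ L)
    (hLip : ∀ a ∈ Sgood VL (VL \ unionBlocks U J) σ₀,
      ∀ b ∈ Sgood VL (VL \ unionBlocks U J) σ₀, |h a - h b| ≤ L * hamW ρ a b) :
    ∀ x ∈ Sgood VL (VL \ unionBlocks U J) σ₀,
      ∀ y ∈ Sgood VL (VL \ unionBlocks U J) σ₀,
      |Kop ν VL U J h x - Kop ν VL U J h y|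
        ≤ ((M : ℝ) / (J.card : ℝ) * L) * hamW ρ x y := by
  have main : ∀ d : ℕ, ∀ x ∈ Sgood VL (VL \ unionBlocks U J) σ₀,
      ∀ y ∈ Sgood VL (VL \ unionBlocks U J) σ₀,
      (univ.filter fun v => x v ≠ y v).card ≤ d →
      |Kop ν VL U J h x - Kop ν VL U J h y|
        ≤ ((M : ℝ) / (J.card : ℝ) * L) * hamW ρ x y := by
    intro d
    induction d with
    | zero =>
      intro x hx y hy hcard
      have : (univ.filter fun v => x v ≠ y v) = ∅ := Finset.card_eq_zero.mp (Nat.le_zero.mp hcard)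
      have hxy : x = y := by
        funext v
        by_contra hv
        have : v ∈ (univ.filter fun v => x v ≠ y v) := by simp [hv]
        rw [‹(univ.filter fun v => x v ≠ y v) = ∅›] at this
        exact absurd this (Finset.notMem_empty v)
      rw [hxy, sub_self, abs_zero, hamW_self, mul_zero]
    | succ d ih =>
      intro x hx y hy hcard
      rcases eq_or_ne x y with hxy | hxy
      · rw [hxy, sub_self, abs_zero, hamW_self, mul_zero]
      obtain ⟨v₀, hv₀⟩ := Function.ne_iff.mp hxy
      set z := Function.update x v₀ (y v₀) with hz
      have hx' := mem_Sgood.mp hx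
      have hy' := mem_Sgood.mp hy
      have hv₀P₀ : v₀ ∉ VL \ unionBlocks U J := by
        intro hmem
        exact hv₀ ((hx'.1 v₀ hmem).trans (hy'.1 v₀ hmem).symm)
      have hv₀VL : v₀ ∈ VL := by
        by_contra hvn
        exact hv₀ ((hx'.2 v₀ hvn).trans (hy'.2 v₀ hvn).symm)
      have hzS : z ∈ Sgood VL (VL \ unionBlocks U J) σ₀ := by
        rw [mem_Sgood]
        constructor
        · intro v hv
          have hvne : v ≠ v₀ := fun he => hv₀P₀ (he ▸ hv)
          rw [hz, Function.update_of_ne hvne]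
          exact hx'.1 v hv
        · intro v hv
          have hvne : v ≠ v₀ := fun he => (he ▸ hv) hv₀VL
          rw [hz, Function.update_of_ne hvne]
          exact hx'.2 v hv
      have hsetz : (univ.filter fun v => z v ≠ y v)
          = (univ.filter fun v => x v ≠ y v).erase v₀ := by
        ext v
        by_cases hv : v = v₀
        · subst hv
          simp [hz, Function.update_self]
        · simp [hz, Function.update_of_ne hv, hv]
      have hcardz : (univ.filter fun v => z v ≠ y v).card ≤ d := by
        rw [hsetz]
        have hv₀mem : v₀ ∈ (univ.filter fun v => x v ≠ y v) := by simp [hv₀]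
        have := Finset.card_erase_of_mem hv₀mem
        omega
      have hadj : |Kop ν VL U J h x - Kop ν VL U J h z|
          ≤ (J.card : ℝ)⁻¹ * ((M : ℝ) * (L * (ρ v₀ : ℝ))) := by
        refine Kop_adj hsupp hdisj hCI hL0 hLip hx hzS ?_ ?_
        · rw [hz, Function.update_self]
          exact hv₀
        · intro v hv
          rw [hz, Function.update_of_ne hv]
      have hrest := ih z hzS y hy hcardz
      calc |Kop ν VL U J h x - Kop ν VL U J h y|
          ≤ |Kop ν VL U J h x - Kop ν VL U J h z|
            + |Kop ν VL U J h z - Kop ν VL U J h y| := abs_sub_le _ _ _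
        _ ≤ (J.card : ℝ)⁻¹ * ((M : ℝ) * (L * (ρ v₀ : ℝ)))
            + ((M : ℝ) / (J.card : ℝ) * L) * hamW ρ z y := add_le_add hadj hrest
        _ = ((M : ℝ) / (J.card : ℝ) * L) * ((ρ v₀ : ℝ) + hamW ρ z y) := by
            field_simp
        _ = ((M : ℝ) / (J.card : ℝ) * L) * hamW ρ x y := by
            rw [← hamW_update_split hv₀]
  intro x hx y hy
  exact main _ x hx y hy le_rfl

end KopLip

section KopAlg

variable {n k : ℕ} {ν : Config n 2 → ℝ} {VL : Finset (Fin n)}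
  {U : Fin k → Finset (Fin n)} {J : Finset (Fin k)}

lemma Kop_expand_right (σ₀ : Config n 2) (w z : Config n 2 → ℝ) :
    (∑ x, restrictDist ν (VL \ unionBlocks U J) σ₀ x * (w x * Kop ν VL U J z x))
      = ∑ i ∈ J, (J.card : ℝ)⁻¹ * ∑ x, restrictDist ν (VL \ unionBlocks U J) σ₀ x *
          (w x * condE ν (VL \ unionBlocks U (J.erase i)) z x) := by
  have h1 : ∀ i ∈ J, (J.card : ℝ)⁻¹ * ∑ x, restrictDist ν (VL \ unionBlocks U J) σ₀ x *
      (w x * condE ν (VL \ unionBlocks U (J.erase i)) z x)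
      = ∑ x, (J.card : ℝ)⁻¹ * (restrictDist ν (VL \ unionBlocks U J) σ₀ x *
          (w x * condE ν (VL \ unionBlocks U (J.erase i)) z x)) := fun i _ => Finset.mul_sum _ _ _
  rw [Finset.sum_congr rfl h1, Finset.sum_comm]
  refine Finset.sum_congr rfl fun x _ => ?_
  unfold Kop
  simp only [Finset.mul_sum]
  refine Finset.sum_congr rfl fun i _ => by ring

lemma Kop_expand_left (σ₀ : Config n 2) (w z : Config n 2 → ℝ) :
    (∑ x, restrictDist ν (VL \ unionBlocks U J) σ₀ x * (Kop ν VL U J w x * z x))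
      = ∑ i ∈ J, (J.card : ℝ)⁻¹ * ∑ x, restrictDist ν (VL \ unionBlocks U J) σ₀ x *
          (condE ν (VL \ unionBlocks U (J.erase i)) w x * z x) := by
  have e1 : (∑ x, restrictDist ν (VL \ unionBlocks U J) σ₀ x * (Kop ν VL U J w x * z x))
      = ∑ x, restrictDist ν (VL \ unionBlocks U J) σ₀ x * (z x * Kop ν VL U J w x) := by
    refine Finset.sum_congr rfl fun x _ => by ring
  rw [e1, Kop_expand_right]
  refine Finset.sum_congr rfl fun i _ => ?_
  congr 1
  refine Finset.sum_congr rfl fun x _ => by ring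

lemma Kop_selfadj (hpos : ∀ P : Finset (Fin n), P ⊆ VL → ∀ x, 0 < massOf ν P x)
    (σ₀ : Config n 2) (u v : Config n 2 → ℝ) :
    ∑ x, restrictDist ν (VL \ unionBlocks U J) σ₀ x * (u x * Kop ν VL U J v x)
      = ∑ x, restrictDist ν (VL \ unionBlocks U J) σ₀ x * (Kop ν VL U J u x * v x) := by
  rw [Kop_expand_right, Kop_expand_left]
  refine Finset.sum_congr rfl fun i _ => ?_
  congr 1
  exact condE_selfadj (P0_subset_Pi VL U J i) σ₀ u v

lemma Kop_stationary (hpos : ∀ P : Finset (Fin n), P ⊆ VL → ∀ x, 0 < massOf ν P x)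
    (hJne : J.Nonempty) (σ₀ : Config n 2) (u : Config n 2 → ℝ) :
    ∑ x, restrictDist ν (VL \ unionBlocks U J) σ₀ x * Kop ν VL U J u x
      = ∑ x, restrictDist ν (VL \ unionBlocks U J) σ₀ x * u x := by
  have e1 : ∑ x, restrictDist ν (VL \ unionBlocks U J) σ₀ x * Kop ν VL U J u x
      = ∑ x, restrictDist ν (VL \ unionBlocks U J) σ₀ x * ((fun _ => (1:ℝ)) x * Kop ν VL U J u x) := by
    refine Finset.sum_congr rfl fun x _ => by ring
  rw [e1, Kop_expand_right]
  have per_i : ∀ i ∈ J, (J.card : ℝ)⁻¹ * ∑ x, restrictDist ν (VL \ unionBlocks U J) σ₀ x *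
      ((fun _ => (1:ℝ)) x * condE ν (VL \ unionBlocks U (J.erase i)) u x)
      = (J.card : ℝ)⁻¹ * ∑ x, restrictDist ν (VL \ unionBlocks U J) σ₀ x * u x := by
    intro i _
    congr 1
    have e2 : ∑ x, restrictDist ν (VL \ unionBlocks U J) σ₀ x *
        ((fun _ => (1:ℝ)) x * condE ν (VL \ unionBlocks U (J.erase i)) u x)
        = ∑ x, restrictDist ν (VL \ unionBlocks U J) σ₀ x *
            condE ν (VL \ unionBlocks U (J.erase i)) u x := by
      refine Finset.sum_congr rfl fun x _ => by ring
    rw [e2]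
    exact condE_stationary (P0_subset_Pi VL U J i)
      (fun x => hpos _ Finset.sdiff_subset x) σ₀ u
  rw [Finset.sum_congr rfl per_i, Finset.sum_const, nsmul_eq_mul]
  have hc : (J.card : ℝ) ≠ 0 := Nat.cast_ne_zero.mpr hJne.card_pos.ne'
  field_simp

lemma Kop_psd (hν0 : ∀ x, 0 ≤ ν x)
    (hpos : ∀ P : Finset (Fin n), P ⊆ VL → ∀ x, 0 < massOf ν P x)
    (σ₀ : Config n 2) (u : Config n 2 → ℝ) :
    0 ≤ ∑ x, restrictDist ν (VL \ unionBlocks U J) σ₀ x * (u x * Kop ν VL U J u x) := by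
  rw [Kop_expand_right]
  refine Finset.sum_nonneg fun i _ => ?_
  refine mul_nonneg (inv_nonneg.mpr (Nat.cast_nonneg _)) ?_
  rw [condE_sq (P0_subset_Pi VL U J i) (fun x => hpos _ Finset.sdiff_subset x) σ₀ u]
  refine Finset.sum_nonneg fun x _ => ?_
  refine mul_nonneg ?_ (mul_self_nonneg _)
  exact restrictDist_nonneg hν0 (hpos _ Finset.sdiff_subset σ₀) x

lemma Kop_add_mul (u v : Config n 2 → ℝ) (c : ℝ) (x : Config n 2) :
    Kop ν VL U J (fun a => u a + c * v a) x = Kop ν VL U J u x + c * Kop ν VL U J v x := by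
  unfold Kop
  rw [Finset.sum_congr rfl fun i _ => condE_add_mul ν _ u v c x, Finset.sum_add_distrib]
  rw [mul_add]
  congr 1
  rw [← Finset.mul_sum]
  ring

lemma Kop_sub_const (hpos : ∀ P : Finset (Fin n), P ⊆ VL → ∀ x, 0 < massOf ν P x)
    (hJne : J.Nonempty) (u : Config n 2 → ℝ) (c : ℝ) (x : Config n 2) :
    Kop ν VL U J (fun a => u a - c) x = Kop ν VL U J u x - c := by
  unfold Kop
  have per_i : ∀ i ∈ J, condE ν (VL \ unionBlocks U (J.erase i)) (fun a => u a - c) x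
      = condE ν (VL \ unionBlocks U (J.erase i)) u x - c := fun i _ =>
    condE_sub_const (hpos _ Finset.sdiff_subset x) u c
  rw [Finset.sum_congr rfl per_i, Finset.sum_sub_distrib, Finset.sum_const, nsmul_eq_mul]
  have hc : (J.card : ℝ) ≠ 0 := Nat.cast_ne_zero.mpr hJne.card_pos.ne'
  field_simp

end KopAlg

section GapMain

lemma arith_aux {j b0 b1 : ℝ} (hj : j ≠ 0) : 2 / j * (j * b0 - j * b1) = 2 * b0 - 2 * b1 := by
  field_simp

theorem gap_main {n k : ℕ} (ν : Config n 2 → ℝ) (VL : Finset (Fin n))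
    (U : Fin k → Finset (Fin n)) (ρ : Fin n → ℕ) (M : ℕ) (J : Finset (Fin k))
    (σ₀ : Config n 2) (g : Config n 2 → ℝ)
    (hν0 : ∀ x, 0 ≤ ν x)
    (hpos : ∀ P : Finset (Fin n), P ⊆ VL → ∀ x, 0 < massOf ν P x)
    (hsupp : ∀ x : Config n 2, ν x ≠ 0 → ∀ v, v ∉ VL → x v = 0)
    (hdisj : ∀ i j, i ≠ j → Disjoint (U i) (U j))
    (hρ : ∀ v, 0 < ρ v) (hM : 1 ≤ M) (hJ : 2 * M ≤ J.card)
    (hCI : ∀ P : Finset (Fin n), P ⊆ VL → ∀ v₀ ∈ P, ∀ σ₁ σ₂ : Config n 2,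
      σ₁ v₀ ≠ σ₂ v₀ → (∀ v ∈ P, v ≠ v₀ → σ₁ v = σ₂ v) →
      ∃ π, IsCoupling (restrictDist ν P σ₁) (restrictDist ν P σ₂) π ∧
        expHam π ρ ≤ (M : ℝ) * (ρ v₀ : ℝ)) :
    varD (restrictDist ν (VL \ unionBlocks U J) σ₀) g
      ≤ 2 / (J.card : ℝ) * ∑ i ∈ J, ∑ x, restrictDist ν (VL \ unionBlocks U J) σ₀ x *
          varD (restrictDist ν (VL \ unionBlocks U (J.erase i)) x) g := by
  classical
  have hP₀VL : VL \ unionBlocks U J ⊆ VL := Finset.sdiff_subset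
  have hJpos : 0 < J.card := lt_of_lt_of_le (by omega) hJ
  have hJne : J.Nonempty := Finset.card_pos.mp hJpos
  have hjR : (0:ℝ) < (J.card : ℝ) := by exact_mod_cast hJpos
  set P₀ := VL \ unionBlocks U J with hP₀def
  set μh := restrictDist ν P₀ σ₀ with hμhdef
  have hμh0 : ∀ x, 0 ≤ μh x := restrictDist_nonneg hν0 (hpos P₀ hP₀VL σ₀)
  have hμh1 : ∑ x, μh x = 1 := sum_restrictDist (hpos P₀ hP₀VL σ₀)
  set e := expVal μh g with hedef
  set h₀ : Config n 2 → ℝ := fun x => g x - e with hh₀def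
  have hmean : ∑ x, μh x * h₀ x = 0 := by
    have e1 : ∑ x, μh x * h₀ x = (∑ x, μh x * g x) - (∑ x, μh x) * e := by
      rw [Finset.sum_mul, ← Finset.sum_sub_distrib]
      refine Finset.sum_congr rfl fun x _ => ?_
      show μh x * (g x - e) = _
      ring
    rw [e1, hμh1]
    have : (∑ x, μh x * g x) = e := rfl
    rw [this]
    ring
  set Kf : (Config n 2 → ℝ) → Config n 2 → ℝ := Kop ν VL U J with hKfdef
  set a : ℕ → ℝ := fun t => ∑ x, μh x * (h₀ x * (Kf^[t] h₀) x) with hadef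
  have hselfadj : ∀ u v : Config n 2 → ℝ,
      ∑ x, μh x * (u x * Kf v x) = ∑ x, μh x * (Kf u x * v x) :=
    fun u v => Kop_selfadj hpos σ₀ u v
  have hstat : ∀ u : Config n 2 → ℝ, ∑ x, μh x * Kf u x = ∑ x, μh x * u x :=
    fun u => Kop_stationary hpos hJne σ₀ u
  have hpsd : ∀ u : Config n 2 → ℝ, 0 ≤ ∑ x, μh x * (u x * Kf u x) :=
    fun u => Kop_psd hν0 hpos σ₀ u
  -- the shift identity
  have hshift : ∀ s t : ℕ,
      ∑ x, μh x * ((Kf^[s] h₀) x * (Kf^[t] h₀) x) = a (s + t) := by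
    intro s
    induction s with
    | zero =>
      intro t
      simp only [Function.iterate_zero, id_eq, Nat.zero_add]
      try rfl
    | succ s ihs =>
      intro t
      have e1 : Kf^[s+1] h₀ = Kf (Kf^[s] h₀) := Function.iterate_succ_apply' Kf s h₀
      have e2 : Kf^[t+1] h₀ = Kf (Kf^[t] h₀) := Function.iterate_succ_apply' Kf t h₀
      calc ∑ x, μh x * ((Kf^[s+1] h₀) x * (Kf^[t] h₀) x)
          = ∑ x, μh x * (Kf (Kf^[s] h₀) x * (Kf^[t] h₀) x) := by rw [e1]
        _ = ∑ x, μh x * ((Kf^[s] h₀) x * Kf (Kf^[t] h₀) x) :=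
            (hselfadj (Kf^[s] h₀) (Kf^[t] h₀)).symm
        _ = ∑ x, μh x * ((Kf^[s] h₀) x * (Kf^[t+1] h₀) x) := by rw [e2]
        _ = a (s + (t+1)) := ihs (t+1)
        _ = a (s + 1 + t) := congrArg a (by omega)
  have ha_nonneg : ∀ t, 0 ≤ a t := by
    intro t
    rcases Nat.even_or_odd t with ⟨s, hs⟩ | ⟨s, hs⟩
    · have : a t = ∑ x, μh x * ((Kf^[s] h₀) x * (Kf^[s] h₀) x) := by
        rw [hshift s s]
        exact congrArg a (by omega)
      rw [this]
      exact Finset.sum_nonneg fun x _ => mul_nonneg (hμh0 x) (mul_self_nonneg _)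
    · have e1 : Kf^[s+1] h₀ = Kf (Kf^[s] h₀) := Function.iterate_succ_apply' Kf s h₀
      have : a t = ∑ x, μh x * ((Kf^[s] h₀) x * Kf (Kf^[s] h₀) x) := by
        rw [← e1, hshift s (s+1)]
        exact congrArg a (by omega)
      rw [this]
      exact hpsd _
  -- Cauchy-Schwarz inequalities
  have hCS : ∀ u v : Config n 2 → ℝ,
      (∑ x, μh x * (u x * v x)) ^ 2
        ≤ (∑ x, μh x * (u x * u x)) * ∑ x, μh x * (v x * v x) := by
    intro u v
    have hq : ∀ c : ℝ, 0 ≤ (∑ x, μh x * (v x * v x)) * (c * c)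
        + (2 * ∑ x, μh x * (u x * v x)) * c + ∑ x, μh x * (u x * u x) := by
      intro c
      have expand : (∑ x, μh x * (v x * v x)) * (c * c)
          + (2 * ∑ x, μh x * (u x * v x)) * c + ∑ x, μh x * (u x * u x)
          = ∑ x, μh x * ((u x + c * v x) * (u x + c * v x)) := by
        rw [Finset.sum_mul, Finset.mul_sum, Finset.sum_mul, ← Finset.sum_add_distrib,
          ← Finset.sum_add_distrib]
        refine Finset.sum_congr rfl fun x _ => by ring
      rw [expand]
      exact Finset.sum_nonneg fun x _ => mul_nonneg (hμh0 x) (mul_self_nonneg _)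
    have hd := discrim_le_zero hq
    unfold discrim at hd
    nlinarith [hd]
  have hBCS : ∀ u v : Config n 2 → ℝ,
      (∑ x, μh x * (u x * Kf v x)) ^ 2
        ≤ (∑ x, μh x * (u x * Kf u x)) * ∑ x, μh x * (v x * Kf v x) := by
    intro u v
    have hsym : ∑ x, μh x * (v x * Kf u x) = ∑ x, μh x * (u x * Kf v x) := by
      rw [hselfadj v u]
      refine Finset.sum_congr rfl fun x _ => by ring
    have hq : ∀ c : ℝ, 0 ≤ (∑ x, μh x * (v x * Kf v x)) * (c * c)
        + (2 * ∑ x, μh x * (u x * Kf v x)) * c + ∑ x, μh x * (u x * Kf u x) := by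
      intro c
      have hKlin : Kf (fun y => u y + c * v y) = fun y => Kf u y + c * Kf v y :=
        funext fun y => Kop_add_mul u v c y
      have expand2 : ∑ x, μh x * ((u x + c * v x) * Kf (fun y => u y + c * v y) x)
          = (∑ x, μh x * (v x * Kf v x)) * (c * c)
            + (∑ x, μh x * (u x * Kf v x)) * c
            + (∑ x, μh x * (v x * Kf u x)) * c
            + ∑ x, μh x * (u x * Kf u x) := by
        rw [hKlin]
        rw [Finset.sum_mul, Finset.sum_mul, Finset.sum_mul, ← Finset.sum_add_distrib,
          ← Finset.sum_add_distrib, ← Finset.sum_add_distrib]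
        refine Finset.sum_congr rfl fun x _ => by ring
      have erw2 : (∑ x, μh x * (v x * Kf v x)) * (c * c)
          + (2 * ∑ x, μh x * (u x * Kf v x)) * c + ∑ x, μh x * (u x * Kf u x)
          = ∑ x, μh x * ((u x + c * v x) * Kf (fun y => u y + c * v y) x) := by
        rw [expand2, hsym]
        ring
      rw [erw2]
      exact hpsd _
    have hd := discrim_le_zero hq
    unfold discrim at hd
    nlinarith [hd]
  -- log-convexity
  have hlc : ∀ t : ℕ, 1 ≤ t → a t ^ 2 ≤ a (t - 1) * a (t + 1) := by
    intro t ht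
    rcases Nat.even_or_odd t with ⟨s, hs⟩ | ⟨s, hs⟩
    · -- t even, t = s + s with s ≥ 1
      obtain ⟨s', hs'⟩ : ∃ s', s = s' + 1 := ⟨s - 1, by omega⟩
      have eKv : Kf (Kf^[s'+1] h₀) = Kf^[s'+2] h₀ :=
        (Function.iterate_succ_apply' Kf (s'+1) h₀).symm
      have eKu : Kf (Kf^[s'] h₀) = Kf^[s'+1] h₀ :=
        (Function.iterate_succ_apply' Kf s' h₀).symm
      have eat : a t = ∑ x, μh x * ((Kf^[s'] h₀) x * Kf (Kf^[s'+1] h₀) x) := by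
        rw [eKv, hshift s' (s'+2)]
        exact congrArg a (by omega)
      have eat1 : ∑ x, μh x * ((Kf^[s'] h₀) x * Kf (Kf^[s'] h₀) x) = a (t - 1) := by
        rw [eKu, hshift s' (s'+1)]
        exact congrArg a (by omega)
      have eat2 : ∑ x, μh x * ((Kf^[s'+1] h₀) x * Kf (Kf^[s'+1] h₀) x) = a (t + 1) := by
        rw [eKv, hshift (s'+1) (s'+2)]
        exact congrArg a (by omega)
      rw [eat, ← eat1, ← eat2]
      exact hBCS (Kf^[s'] h₀) (Kf^[s'+1] h₀)
    · -- t odd, t = 2s+1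
      have eat : a t = ∑ x, μh x * ((Kf^[s] h₀) x * (Kf^[s+1] h₀) x) := by
        rw [hshift s (s+1)]
        exact congrArg a (by omega)
      have eat1 : ∑ x, μh x * ((Kf^[s] h₀) x * (Kf^[s] h₀) x) = a (t - 1) := by
        rw [hshift s s]
        exact congrArg a (by omega)
      have eat2 : ∑ x, μh x * ((Kf^[s+1] h₀) x * (Kf^[s+1] h₀) x) = a (t + 1) := by
        rw [hshift (s+1) (s+1)]
        exact congrArg a (by omega)
      rw [eat, ← eat1, ← eat2]
      exact hCS (Kf^[s] h₀) (Kf^[s+1] h₀)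
  -- Lipschitz setup
  have hSne : (Sgood VL P₀ σ₀).Nonempty := ⟨pinRep P₀ σ₀, pinRep_mem_Sgood hP₀VL σ₀⟩
  set R : ℝ := (Sgood VL P₀ σ₀).sup' hSne (fun x => |h₀ x|) with hRdef
  have hR0 : 0 ≤ R :=
    le_trans (abs_nonneg _) (Finset.le_sup' (fun x => |h₀ x|) (pinRep_mem_Sgood hP₀VL σ₀))
  have hLip0 : ∀ x ∈ Sgood VL P₀ σ₀, ∀ y ∈ Sgood VL P₀ σ₀,
      |h₀ x - h₀ y| ≤ (2 * R) * hamW ρ x y := by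
    intro x hx y hy
    rcases eq_or_ne x y with he | hne
    · rw [he, sub_self, abs_zero, hamW_self, mul_zero]
    · have h2 : |h₀ x| ≤ R := Finset.le_sup' (fun x => |h₀ x|) hx
      have h3 : |h₀ y| ≤ R := Finset.le_sup' (fun x => |h₀ x|) hy
      have h4 : (1:ℝ) ≤ hamW ρ x y := hamW_ge_one hρ hne
      calc |h₀ x - h₀ y| ≤ |h₀ x| + |h₀ y| := abs_sub _ _
        _ ≤ 2 * R := by linarith
        _ = (2 * R) * 1 := by ring
        _ ≤ (2 * R) * hamW ρ x y := by
            apply mul_le_mul_of_nonneg_left h4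
            linarith
  set γ : ℝ := (M : ℝ) / (J.card : ℝ) with hγdef
  have hMpos : (0:ℝ) < (M:ℝ) := by exact_mod_cast hM
  have hγpos : 0 < γ := div_pos hMpos hjR
  have hγhalf : γ ≤ 1 / 2 := by
    rw [hγdef, div_le_div_iff₀ hjR (by norm_num : (0:ℝ) < 2)]
    have : (2:ℝ) * (M:ℝ) ≤ (J.card : ℝ) := by exact_mod_cast hJ
    linarith
  have hLipIter : ∀ t, ∀ x ∈ Sgood VL P₀ σ₀, ∀ y ∈ Sgood VL P₀ σ₀,
      |(Kf^[t] h₀) x - (Kf^[t] h₀) y| ≤ (γ ^ t * (2 * R)) * hamW ρ x y := by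
    intro t
    induction t with
    | zero =>
      intro x hx y hy
      simp only [Function.iterate_zero, id_eq, pow_zero, one_mul]
      exact hLip0 x hx y hy
    | succ t iht =>
      intro x hx y hy
      have hL0' : 0 ≤ γ ^ t * (2 * R) := by positivity
      have hstep := Kop_lip hsupp hdisj hCI hL0' iht x hx y hy
      have e1 : Kf^[t+1] h₀ = Kf (Kf^[t] h₀) := Function.iterate_succ_apply' Kf t h₀
      rw [e1]
      calc |Kf (Kf^[t] h₀) x - Kf (Kf^[t] h₀) y|
          ≤ ((M : ℝ) / (J.card : ℝ) * (γ ^ t * (2 * R))) * hamW ρ x y := hstep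
        _ = (γ ^ (t+1) * (2 * R)) * hamW ρ x y := by
            rw [hγdef]
            ring
  have hmeant : ∀ t, ∑ x, μh x * (Kf^[t] h₀) x = 0 := by
    intro t
    induction t with
    | zero =>
      simp only [Function.iterate_zero, id_eq]
      exact hmean
    | succ t iht =>
      have e1 : Kf^[t+1] h₀ = Kf (Kf^[t] h₀) := Function.iterate_succ_apply' Kf t h₀
      rw [e1, hstat (Kf^[t] h₀)]
      exact iht
  -- decay of a
  set D : ℝ := ∑ v : Fin n, (ρ v : ℝ) with hDdef
  have hD0 : 0 ≤ D := Finset.sum_nonneg fun v _ => Nat.cast_nonneg _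
  set x₀ : Config n 2 := pinRep P₀ σ₀ with hx₀def
  have hx₀S : x₀ ∈ Sgood VL P₀ σ₀ := pinRep_mem_Sgood hP₀VL σ₀
  set C : ℝ := (∑ x, μh x * |h₀ x|) * ((2 * R) * D) with hCdef
  have hdecay : ∀ t, a t ≤ C * γ ^ t := by
    intro t
    have e1 : a t = ∑ x, μh x * (h₀ x * ((Kf^[t] h₀) x - (Kf^[t] h₀) x₀)) := by
      have e2 : ∑ x, μh x * (h₀ x * ((Kf^[t] h₀) x - (Kf^[t] h₀) x₀))
          = (∑ x, μh x * (h₀ x * (Kf^[t] h₀) x))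
            - (∑ x, μh x * h₀ x) * (Kf^[t] h₀) x₀ := by
        rw [Finset.sum_mul, ← Finset.sum_sub_distrib]
        refine Finset.sum_congr rfl fun x _ => by ring
      rw [e2, hmean, zero_mul, sub_zero, hadef]
    rw [e1]
    have hterm : ∀ x ∈ (univ : Finset (Config n 2)),
        μh x * (h₀ x * ((Kf^[t] h₀) x - (Kf^[t] h₀) x₀))
          ≤ μh x * (|h₀ x| * (γ ^ t * (2 * R) * D)) := by
      intro x _
      rcases eq_or_ne (μh x) 0 with h0 | h0
      · rw [h0, zero_mul, zero_mul]
      · have hxS : x ∈ Sgood VL P₀ σ₀ := by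
          rcases restrictDist_support h0 with ⟨hνx, hagree⟩
          exact mem_Sgood.mpr ⟨hagree, hsupp x hνx⟩
        have hGt : |(Kf^[t] h₀) x - (Kf^[t] h₀) x₀| ≤ γ ^ t * (2 * R) * D := by
          calc |(Kf^[t] h₀) x - (Kf^[t] h₀) x₀|
              ≤ (γ ^ t * (2 * R)) * hamW ρ x x₀ := hLipIter t x hxS x₀ hx₀S
            _ ≤ (γ ^ t * (2 * R)) * D := by
                apply mul_le_mul_of_nonneg_left (hamW_le_total ρ x x₀)
                positivity
            _ = γ ^ t * (2 * R) * D := rfl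
        have hinner : h₀ x * ((Kf^[t] h₀) x - (Kf^[t] h₀) x₀)
            ≤ |h₀ x| * (γ ^ t * (2 * R) * D) := by
          calc h₀ x * ((Kf^[t] h₀) x - (Kf^[t] h₀) x₀)
              ≤ |h₀ x * ((Kf^[t] h₀) x - (Kf^[t] h₀) x₀)| := le_abs_self _
            _ = |h₀ x| * |(Kf^[t] h₀) x - (Kf^[t] h₀) x₀| := abs_mul _ _
            _ ≤ |h₀ x| * (γ ^ t * (2 * R) * D) :=
                mul_le_mul_of_nonneg_left hGt (abs_nonneg _)
        exact mul_le_mul_of_nonneg_left hinner (hμh0 x)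
    calc ∑ x, μh x * (h₀ x * ((Kf^[t] h₀) x - (Kf^[t] h₀) x₀))
        ≤ ∑ x, μh x * (|h₀ x| * (γ ^ t * (2 * R) * D)) := Finset.sum_le_sum hterm
      _ = C * γ ^ t := by
          have e3 : ∑ x, μh x * (|h₀ x| * (γ ^ t * (2 * R) * D))
              = ((∑ x, μh x * |h₀ x|) * ((2 * R) * D)) * γ ^ t := by
            rw [Finset.sum_mul, Finset.sum_mul]
            refine Finset.sum_congr rfl fun x _ => by ring
          rw [e3, hCdef]
  have hgap : a 1 ≤ γ * a 0 := geom_gap ha_nonneg hlc hγpos hdecay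
  -- identities
  have ha00 : a 0 = ∑ x, μh x * (h₀ x * h₀ x) := by
    show ∑ x, μh x * (h₀ x * (Kf^[0] h₀) x) = _
    simp only [Function.iterate_zero, id_eq]
  have hvar : varD μh g = a 0 := by
    rw [ha00]
    unfold varD
    rw [← hedef]
    unfold expVal
    refine Finset.sum_congr rfl fun x _ => ?_
    show μh x * (g x - e) ^ 2 = μh x * (h₀ x * h₀ x)
    rw [hh₀def]
    ring
  have hRHSi : ∀ i ∈ J, ∑ x, μh x * varD (restrictDist ν (VL \ unionBlocks U (J.erase i)) x) g
      = a 0 - ∑ x, μh x * (h₀ x * condE ν (VL \ unionBlocks U (J.erase i)) h₀ x) := by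
    intro i hi
    have hsub := P0_subset_Pi VL U J i
    have hposi : ∀ x : Config n 2, 0 < massOf ν (VL \ unionBlocks U (J.erase i)) x :=
      fun x => hpos _ Finset.sdiff_subset x
    have h1 := avg_condVar_eq hsub hposi σ₀ g
    have h2 : ∀ x, condE ν (VL \ unionBlocks U (J.erase i)) h₀ x
        = condE ν (VL \ unionBlocks U (J.erase i)) g x - e := by
      intro x
      rw [hh₀def]
      exact condE_sub_const (hposi x) g e
    have h3 := condE_sq hsub hposi σ₀ h₀
    calc ∑ x, μh x * varD (restrictDist ν (VL \ unionBlocks U (J.erase i)) x) g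
        = ∑ x, μh x * ((g x - condE ν (VL \ unionBlocks U (J.erase i)) g x)
            * (g x - condE ν (VL \ unionBlocks U (J.erase i)) g x)) := h1
      _ = ∑ x, μh x * ((h₀ x - condE ν (VL \ unionBlocks U (J.erase i)) h₀ x)
            * (h₀ x - condE ν (VL \ unionBlocks U (J.erase i)) h₀ x)) := by
          refine Finset.sum_congr rfl fun x _ => ?_
          rw [h2 x, hh₀def]
          ring_nf
      _ = (∑ x, μh x * (h₀ x * h₀ x))
            - 2 * (∑ x, μh x * (h₀ x * condE ν (VL \ unionBlocks U (J.erase i)) h₀ x))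
            + ∑ x, μh x * (condE ν (VL \ unionBlocks U (J.erase i)) h₀ x
                * condE ν (VL \ unionBlocks U (J.erase i)) h₀ x) := by
          rw [Finset.mul_sum, ← Finset.sum_sub_distrib, ← Finset.sum_add_distrib]
          refine Finset.sum_congr rfl fun x _ => by ring
      _ = a 0 - ∑ x, μh x * (h₀ x * condE ν (VL \ unionBlocks U (J.erase i)) h₀ x) := by
          rw [← h3, ha00]
          ring
  have ha1K : a 1 = ∑ x, μh x * (h₀ x * Kf h₀ x) := by
    show ∑ x, μh x * (h₀ x * (Kf^[1] h₀) x) = _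
    simp only [Function.iterate_one]
  have hKsum : ∑ i ∈ J, ∑ x, μh x * (h₀ x * condE ν (VL \ unionBlocks U (J.erase i)) h₀ x)
      = (J.card : ℝ) * a 1 := by
    have e2 := Kop_expand_right (ν := ν) (VL := VL) (U := U) (J := J) σ₀ h₀ h₀
    have e3 : a 1 = ∑ i ∈ J, (J.card : ℝ)⁻¹
        * ∑ x, μh x * (h₀ x * condE ν (VL \ unionBlocks U (J.erase i)) h₀ x) := by
      rw [ha1K]
      exact e2
    rw [e3, ← Finset.mul_sum, ← mul_assoc, mul_inv_cancel₀ hjR.ne', one_mul]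
  -- put everything together
  have hfinal : ∑ i ∈ J, ∑ x, μh x *
      varD (restrictDist ν (VL \ unionBlocks U (J.erase i)) x) g
      = (J.card : ℝ) * a 0 - (J.card : ℝ) * a 1 := by
    rw [Finset.sum_congr rfl hRHSi, Finset.sum_sub_distrib, Finset.sum_const, nsmul_eq_mul,
      hKsum]
  rw [hvar, hfinal]
  have ha0nn : 0 ≤ a 0 := ha_nonneg 0
  have h2a1 : 2 * a 1 ≤ a 0 := by
    have : γ * a 0 ≤ (1/2) * a 0 := mul_le_mul_of_nonneg_right hγhalf ha0nn
    linarith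
  have harith : 2 / (J.card : ℝ) * ((J.card : ℝ) * a 0 - (J.card : ℝ) * a 1)
      = 2 * a 0 - 2 * a 1 := arith_aux hjR.ne'
  rw [harith]
  linarith

end GapMain

section Combinatorics

lemma double_count {α : Type*} [DecidableEq α] (J : Finset α) (t : ℕ) (f : Finset α → ℝ) :
    ∑ i ∈ J, ∑ R ∈ (J.erase i).powersetCard t, f R
      = ∑ R ∈ J.powersetCard t, ((J.card - t : ℕ) : ℝ) * f R := by
  have key : ∀ i ∈ J, (J.erase i).powersetCard t
      = (J.powersetCard t).filter (fun R => i ∉ R) := by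
    intro i hi
    ext R
    simp only [Finset.mem_powersetCard, Finset.mem_filter]
    constructor
    · rintro ⟨hsub, hcard⟩
      exact ⟨⟨hsub.trans (Finset.erase_subset i J), hcard⟩,
        fun hiR => (Finset.mem_erase.mp (hsub hiR)).1 rfl⟩
    · rintro ⟨⟨hsub, hcard⟩, hiR⟩
      exact ⟨fun x hx => Finset.mem_erase.mpr ⟨fun he => hiR (he ▸ hx), hsub hx⟩, hcard⟩
  calc ∑ i ∈ J, ∑ R ∈ (J.erase i).powersetCard t, f R
      = ∑ i ∈ J, ∑ R ∈ J.powersetCard t, (if i ∉ R then f R else 0) := by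
        refine Finset.sum_congr rfl fun i hi => ?_
        rw [key i hi, Finset.sum_filter]
    _ = ∑ R ∈ J.powersetCard t, ∑ i ∈ J, (if i ∉ R then f R else 0) := Finset.sum_comm
    _ = ∑ R ∈ J.powersetCard t, ((J.card - t : ℕ) : ℝ) * f R := by
        refine Finset.sum_congr rfl fun R hR => ?_
        rcases Finset.mem_powersetCard.mp hR with ⟨hsub, hcard⟩
        rw [← Finset.sum_filter, Finset.sum_const, nsmul_eq_mul]
        have hflt : (J.filter fun i => i ∉ R) = J \ R := by
          ext v
          simp [Finset.mem_sdiff]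
        rw [hflt, Finset.card_sdiff_of_subset hsub, hcard]

lemma choose_identity {j t : ℕ} (ht : t < j) :
    (j - t) * j.choose t = j * (j - 1).choose t := by
  obtain ⟨j', rfl⟩ : ∃ j', j = j' + 1 := ⟨j - 1, by omega⟩
  have h := Nat.choose_mul_succ_eq j' t
  simp only [Nat.add_sub_cancel]
  calc (j' + 1 - t) * (j' + 1).choose t = (j' + 1).choose t * (j' + 1 - t) := mul_comm _ _
    _ = j'.choose t * (j' + 1) := h.symm
    _ = (j' + 1) * j'.choose t := mul_comm _ _

lemma top_stationary {n : ℕ} {m : Config n 2 → ℝ} (hm1 : ∑ x, m x = 1)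
    {P : Finset (Fin n)} (hpos : ∀ x : Config n 2, 0 < massOf m P x)
    (H : Config n 2 → ℝ) :
    ∑ σ, m σ * (∑ x, restrictDist m P σ x * H x) = ∑ x, m x * H x := by
  have h := condE_stationary (m := m) (P := (∅ : Finset (Fin n))) (P' := P)
    (Finset.empty_subset P) hpos (fun _ => 0) H
  rw [restrictDist_empty hm1] at h
  exact h

end Combinatorics

section NuInd

lemma swap_helper {n : ℕ} {κ : Type*} (J : Finset κ) (ν : Config n 2 → ℝ) (c : ℝ)
    (A : κ → Config n 2 → ℝ) :
    ∑ σ : Config n 2, ν σ * (c * ∑ i ∈ J, A i σ) = c * ∑ i ∈ J, ∑ σ, ν σ * A i σ := by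
  calc ∑ σ : Config n 2, ν σ * (c * ∑ i ∈ J, A i σ)
      = ∑ σ : Config n 2, ∑ i ∈ J, c * (ν σ * A i σ) := by
        refine Finset.sum_congr rfl fun σ _ => ?_
        rw [Finset.mul_sum, Finset.mul_sum]
        refine Finset.sum_congr rfl fun i _ => by ring
    _ = ∑ i ∈ J, ∑ σ : Config n 2, c * (ν σ * A i σ) := Finset.sum_comm
    _ = ∑ i ∈ J, c * ∑ σ : Config n 2, ν σ * A i σ := by
        refine Finset.sum_congr rfl fun i _ => ?_
        rw [Finset.mul_sum]
    _ = c * ∑ i ∈ J, ∑ σ : Config n 2, ν σ * A i σ := (Finset.mul_sum _ _ _).symm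

lemma coeff_arith2 {jR A B d e2 : ℝ} (hj : 0 < jR) (hA : 0 < A) (hB : 0 < B)
    (hid : d * B = jR * A) :
    2 / jR * (e2 / A) * d = 2 * e2 / B := by
  field_simp
  linear_combination e2 * hid

theorem nu_ind {n k : ℕ} (ν : Config n 2 → ℝ) (VL : Finset (Fin n))
    (U : Fin k → Finset (Fin n)) (ρ : Fin n → ℕ) (M : ℕ)
    (hν0 : ∀ x, 0 ≤ ν x) (hν1 : ∑ x, ν x = 1)
    (hpos : ∀ P : Finset (Fin n), P ⊆ VL → ∀ x, 0 < massOf ν P x)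
    (hsupp : ∀ x : Config n 2, ν x ≠ 0 → ∀ v, v ∉ VL → x v = 0)
    (hdisj : ∀ i j, i ≠ j → Disjoint (U i) (U j))
    (hρ : ∀ v, 0 < ρ v) (hM : 1 ≤ M)
    (hCI : ∀ P : Finset (Fin n), P ⊆ VL → ∀ v₀ ∈ P, ∀ σ₁ σ₂ : Config n 2,
      σ₁ v₀ ≠ σ₂ v₀ → (∀ v ∈ P, v ≠ v₀ → σ₁ v = σ₂ v) →
      ∃ π, IsCoupling (restrictDist ν P σ₁) (restrictDist ν P σ₂) π ∧
        expHam π ρ ≤ (M : ℝ) * (ρ v₀ : ℝ)) :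
    ∀ J : Finset (Fin k), 2 * M ≤ J.card → ∀ g : Config n 2 → ℝ,
      ∑ σ, ν σ * varD (restrictDist ν (VL \ unionBlocks U J) σ) g
        ≤ (2:ℝ) ^ (J.card - 2 * M) / (J.card.choose (2 * M) : ℝ) *
            ∑ R ∈ J.powersetCard (2 * M),
              ∑ σ, ν σ * varD (restrictDist ν (VL \ unionBlocks U R) σ) g := by
  intro J
  induction J using Finset.strongInduction with
  | _ J ih =>
    intro hJcard g
    rcases eq_or_lt_of_le hJcard with heq | hlt
    · -- base case: J.card = 2M
      have hpc : J.powersetCard (2 * M) = {J} := by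
        rw [heq]
        exact Finset.powersetCard_self J
      rw [hpc, Finset.sum_singleton]
      have h1 : J.card - 2 * M = 0 := by omega
      have h2 : J.card.choose (2 * M) = 1 := by
        rw [← heq, Nat.choose_self]
      rw [h1, h2, pow_zero]
      norm_num
    · -- inductive step
      have hJpos : 0 < J.card := by omega
      have hjR : (0:ℝ) < (J.card : ℝ) := by exact_mod_cast hJpos
      have hstat0 : ∀ H : Config n 2 → ℝ,
          ∑ σ, ν σ * (∑ x, restrictDist ν (VL \ unionBlocks U J) σ x * H x)
            = ∑ x, ν x * H x :=
        fun H => top_stationary hν1 (fun x => hpos _ Finset.sdiff_subset x) H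
      have point : ∀ σ₀ : Config n 2,
          varD (restrictDist ν (VL \ unionBlocks U J) σ₀) g
            ≤ 2 / (J.card : ℝ) * ∑ i ∈ J, ∑ x,
                restrictDist ν (VL \ unionBlocks U J) σ₀ x *
                  varD (restrictDist ν (VL \ unionBlocks U (J.erase i)) x) g :=
        fun σ₀ => gap_main ν VL U ρ M J σ₀ g hν0 hpos hsupp hdisj hρ hM hlt.le hCI
      have s1 : ∑ σ, ν σ * varD (restrictDist ν (VL \ unionBlocks U J) σ) g
          ≤ 2 / (J.card : ℝ) * ∑ i ∈ J, ∑ σ, ν σ *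
              varD (restrictDist ν (VL \ unionBlocks U (J.erase i)) σ) g := by
        calc ∑ σ, ν σ * varD (restrictDist ν (VL \ unionBlocks U J) σ) g
            ≤ ∑ σ, ν σ * (2 / (J.card : ℝ) * ∑ i ∈ J, ∑ x,
                restrictDist ν (VL \ unionBlocks U J) σ x *
                  varD (restrictDist ν (VL \ unionBlocks U (J.erase i)) x) g) :=
              Finset.sum_le_sum fun σ _ =>
                mul_le_mul_of_nonneg_left (point σ) (hν0 σ)
          _ = 2 / (J.card : ℝ) * ∑ i ∈ J, ∑ σ, ν σ * (∑ x,
                restrictDist ν (VL \ unionBlocks U J) σ x *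
                  varD (restrictDist ν (VL \ unionBlocks U (J.erase i)) x) g) :=
              swap_helper J ν _ _
          _ = 2 / (J.card : ℝ) * ∑ i ∈ J, ∑ σ, ν σ *
                varD (restrictDist ν (VL \ unionBlocks U (J.erase i)) σ) g := by
              congr 1
              refine Finset.sum_congr rfl fun i _ => ?_
              exact hstat0 _
      have ihs : ∀ i ∈ J, ∑ σ, ν σ *
          varD (restrictDist ν (VL \ unionBlocks U (J.erase i)) σ) g
          ≤ (2:ℝ) ^ (J.card - 1 - 2 * M) / (((J.card - 1).choose (2 * M)) : ℝ) *
              ∑ R ∈ (J.erase i).powersetCard (2 * M),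
                ∑ σ, ν σ * varD (restrictDist ν (VL \ unionBlocks U R) σ) g := by
        intro i hi
        have h1 := ih (J.erase i) (Finset.erase_ssubset hi)
          (by rw [Finset.card_erase_of_mem hi]; omega) g
        rwa [Finset.card_erase_of_mem hi] at h1
      have hA : (0:ℝ) < (((J.card - 1).choose (2 * M)) : ℝ) := by
        have : 0 < (J.card - 1).choose (2 * M) := Nat.choose_pos (by omega)
        exact_mod_cast this
      have hB : (0:ℝ) < ((J.card.choose (2 * M)) : ℝ) := by
        have : 0 < J.card.choose (2 * M) := Nat.choose_pos (by omega)
        exact_mod_cast this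
      have hid : ((J.card - 2 * M : ℕ) : ℝ) * ((J.card.choose (2 * M)) : ℝ)
          = (J.card : ℝ) * (((J.card - 1).choose (2 * M)) : ℝ) := by
        have := choose_identity (j := J.card) (t := 2 * M) hlt
        exact_mod_cast this
      have step2 : ∑ i ∈ J, ∑ σ, ν σ *
          varD (restrictDist ν (VL \ unionBlocks U (J.erase i)) σ) g
          ≤ (2:ℝ) ^ (J.card - 1 - 2 * M) / (((J.card - 1).choose (2 * M)) : ℝ) *
              ∑ i ∈ J, ∑ R ∈ (J.erase i).powersetCard (2 * M),
                ∑ σ, ν σ * varD (restrictDist ν (VL \ unionBlocks U R) σ) g := by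
        rw [Finset.mul_sum]
        exact Finset.sum_le_sum ihs
      have step3 := double_count J (2 * M)
        (fun R => ∑ σ, ν σ * varD (restrictDist ν (VL \ unionBlocks U R) σ) g)
      calc ∑ σ, ν σ * varD (restrictDist ν (VL \ unionBlocks U J) σ) g
          ≤ 2 / (J.card : ℝ) * ∑ i ∈ J, ∑ σ, ν σ *
              varD (restrictDist ν (VL \ unionBlocks U (J.erase i)) σ) g := s1
        _ ≤ 2 / (J.card : ℝ) * ((2:ℝ) ^ (J.card - 1 - 2 * M)
              / (((J.card - 1).choose (2 * M)) : ℝ) *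
              ∑ i ∈ J, ∑ R ∈ (J.erase i).powersetCard (2 * M),
                ∑ σ, ν σ * varD (restrictDist ν (VL \ unionBlocks U R) σ) g) :=
            mul_le_mul_of_nonneg_left step2 (by positivity)
        _ = 2 / (J.card : ℝ) * ((2:ℝ) ^ (J.card - 1 - 2 * M)
              / (((J.card - 1).choose (2 * M)) : ℝ) *
              ∑ R ∈ J.powersetCard (2 * M), ((J.card - 2 * M : ℕ) : ℝ) *
                (∑ σ, ν σ * varD (restrictDist ν (VL \ unionBlocks U R) σ) g)) := by
            rw [step3]
        _ = (2 / (J.card : ℝ) * ((2:ℝ) ^ (J.card - 1 - 2 * M)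
              / (((J.card - 1).choose (2 * M)) : ℝ)) * ((J.card - 2 * M : ℕ) : ℝ)) *
              ∑ R ∈ J.powersetCard (2 * M),
                ∑ σ, ν σ * varD (restrictDist ν (VL \ unionBlocks U R) σ) g := by
            rw [← Finset.mul_sum]
            ring
        _ = (2:ℝ) ^ (J.card - 2 * M) / (J.card.choose (2 * M) : ℝ) *
              ∑ R ∈ J.powersetCard (2 * M),
                ∑ σ, ν σ * varD (restrictDist ν (VL \ unionBlocks U R) σ) g := by
            congr 1
            have he : J.card - 2 * M = (J.card - 1 - 2 * M) + 1 := by omega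
            rw [coeff_arith2 hjR hA hB hid, he, pow_succ]
            ring

end NuInd

section Transfer

variable {n : ℕ}

lemma expVal_restrict_form (m : Config n 2 → ℝ) (P : Finset (Fin n))
    (σ : Config n 2) (h : Config n 2 → ℝ) :
    expVal (restrictDist m P σ) h
      = (∑ a, if ∀ v ∈ P, a v = σ v then m a * h a else 0) / massOf m P σ := by
  unfold expVal
  rw [Finset.sum_div]
  refine Finset.sum_congr rfl fun a _ => ?_
  rw [restrictDist_apply]
  split
  · rw [div_mul_eq_mul_div]
  · simp

lemma massOf_transfer (μ : Config n 2 → ℝ) (VL P : Finset (Fin n)) (hP : P ⊆ VL)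
    (σ : Config n 2) : massOf (marginalOn μ VL) P σ = massOf μ P σ := by
  unfold massOf
  rw [Finset.sum_filter, Finset.sum_filter]
  have h1 : ∀ m : Config n 2 → ℝ, (∑ a, if (∀ v ∈ P, a v = σ v) then m a else 0)
      = ∑ a, m a * (if (∀ v ∈ P, a v = σ v) then 1 else 0) := by
    intro m
    refine Finset.sum_congr rfl fun a _ => by split <;> simp
  rw [h1, h1]
  apply marg_transfer
  intro a b hab
  show (if ∀ v ∈ P, a v = σ v then (1:ℝ) else 0) = (if ∀ v ∈ P, b v = σ v then (1:ℝ) else 0)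
  by_cases hca : ∀ v ∈ P, a v = σ v
  · rw [if_pos hca, if_pos fun v hv => (hab v (hP hv)).symm.trans (hca v hv)]
  · rw [if_neg hca, if_neg fun hcb => hca fun v hv => (hab v (hP hv)).trans (hcb v hv)]

lemma num_transfer (μ : Config n 2 → ℝ) (VL P : Finset (Fin n)) (hP : P ⊆ VL)
    (σ : Config n 2) (h : Config n 2 → ℝ) (hdep : DepOn VL h) :
    (∑ a, if (∀ v ∈ P, a v = σ v) then marginalOn μ VL a * h a else 0)
      = ∑ a, if (∀ v ∈ P, a v = σ v) then μ a * h a else 0 := by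
  have h1 : ∀ m : Config n 2 → ℝ,
      (∑ a, if (∀ v ∈ P, a v = σ v) then m a * h a else 0)
        = ∑ a, m a * (if (∀ v ∈ P, a v = σ v) then h a else 0) := by
    intro m
    refine Finset.sum_congr rfl fun a _ => by split <;> simp
  rw [h1, h1]
  apply marg_transfer
  intro a b hab
  show (if ∀ v ∈ P, a v = σ v then h a else 0) = (if ∀ v ∈ P, b v = σ v then h b else 0)
  by_cases hca : ∀ v ∈ P, a v = σ v
  · rw [if_pos hca, if_pos fun v hv => (hab v (hP hv)).symm.trans (hca v hv), hdep a b hab]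
  · rw [if_neg hca, if_neg fun hcb => hca fun v hv => (hab v (hP hv)).trans (hcb v hv)]

lemma expVal_transfer (μ : Config n 2 → ℝ) (VL P : Finset (Fin n)) (hP : P ⊆ VL)
    (σ : Config n 2) (h : Config n 2 → ℝ) (hdep : DepOn VL h) :
    expVal (restrictDist (marginalOn μ VL) P σ) h = expVal (restrictDist μ P σ) h := by
  rw [expVal_restrict_form, expVal_restrict_form, massOf_transfer μ VL P hP σ,
    num_transfer μ VL P hP σ h hdep]

lemma varD_restrict_transfer (μ : Config n 2 → ℝ) (VL P : Finset (Fin n)) (hP : P ⊆ VL)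
    (σ : Config n 2) (F : Config n 2 → ℝ) (hF : DepOn VL F) :
    varD (restrictDist (marginalOn μ VL) P σ) F = varD (restrictDist μ P σ) F := by
  unfold varD
  rw [expVal_transfer μ VL P hP σ F hF]
  refine expVal_transfer μ VL P hP σ (fun a => (F a - expVal (restrictDist μ P σ) F) ^ 2)
    (fun a b hab => ?_)
  show (F a - expVal (restrictDist μ P σ) F) ^ 2 = (F b - expVal (restrictDist μ P σ) F) ^ 2
  rw [hF a b hab]

lemma sum_var_transfer (μ : Config n 2 → ℝ) (VL P : Finset (Fin n)) (hP : P ⊆ VL)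
    (F : Config n 2 → ℝ) (hF : DepOn VL F) :
    ∑ σ, marginalOn μ VL σ * varD (restrictDist (marginalOn μ VL) P σ) F
      = ∑ σ, μ σ * varD (restrictDist μ P σ) F := by
  have h1 : ∀ σ : Config n 2, varD (restrictDist (marginalOn μ VL) P σ) F
      = varD (restrictDist μ P σ) F := fun σ => varD_restrict_transfer μ VL P hP σ F hF
  rw [Finset.sum_congr rfl fun σ _ => by rw [h1 σ]]
  apply marg_transfer
  intro a b hab
  have heq : restrictDist μ P a = restrictDist μ P b :=
    restrictDist_congr fun v hv => hab v (hP hv)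
  show varD (restrictDist μ P a) F = varD (restrictDist μ P b) F
  rw [heq]

end Transfer

/-- Lemma 8.5: relaxation of the block dynamics `B` for the
bipartite hardcore model.  If the left marginal `μ_L` is `M`-coupling
independent and `V_L = U_1 ⊎ ⋯ ⊎ U_k` with `k ≥ 2M`, then the block dynamics
which resamples `U_S ∪ V_R` for a uniformly random `S ⊆ [k]` of size `2M` has
relaxation time at most `2^(k−2M)`, i.e. for every `f`,
`Var_μ[f] ≤ (2^(k−2M)/C(k,2M)) · Σ_{|S|=2M} μ[Var_{U_S ∪ V_R}[f]]`. -/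
theorem statement15 {n : ℕ} (G : SimpleGraph (Fin n)) (VL : Finset (Fin n))
    (lam : ℝ) (hbip : Bipartite G VL) (hlam : 0 < lam)
    (M k : ℕ) (hM : 1 ≤ M) (hk : 2 * M ≤ k)
    (hCI : ∃ ρ : Fin n → ℕ, (∀ v, 0 < ρ v) ∧
      ∀ (P : Finset (Fin n)), P ⊆ VL → ∀ v₀ ∈ P,
      ∀ σ₁ σ₂ : Config n 2, σ₁ v₀ ≠ σ₂ v₀ →
        (∀ v ∈ P, v ≠ v₀ → σ₁ v = σ₂ v) →
        ∃ π, IsCoupling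
            (restrictDist (marginalOn (hardcoreDist G lam) VL) P σ₁)
            (restrictDist (marginalOn (hardcoreDist G lam) VL) P σ₂) π ∧
          expHam π ρ ≤ (M : ℝ) * (ρ v₀ : ℝ))
    (U : Fin k → Finset (Fin n))
    (hdisj : ∀ i j, i ≠ j → Disjoint (U i) (U j))
    (hcover : ∀ v : Fin n, v ∈ VL ↔ ∃ i, v ∈ U i) :
    ∀ f : Config n 2 → ℝ,
      varD (hardcoreDist G lam) f ≤
        (2 : ℝ) ^ (k - 2 * M) / (k.choose (2 * M) : ℝ) *
          ∑ R ∈ (univ : Finset (Fin k)).powersetCard (2 * M),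
            avgCondVar (hardcoreDist G lam) (unionBlocks U R ∪ VLᶜ) f := by
  intro f
  classical
  set μ := hardcoreDist G lam with hμdef
  set ν := marginalOn μ VL with hνdef
  obtain ⟨ρ, hρ, hCI⟩ := hCI
  have hμ0 : ∀ x, 0 ≤ μ x := hardcoreDist_nonneg hbip hlam
  have hμ1 : ∑ x, μ x = 1 := sum_hardcoreDist hbip hlam
  have hposμ : ∀ P : Finset (Fin n), P ⊆ VL → ∀ x, 0 < massOf μ P x :=
    fun P hP x => massOf_hardcore_pos hbip hlam hP x
  have hν0 : ∀ x, 0 ≤ ν x := fun x => marginalOn_nonneg hμ0 VL x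
  have hν1 : ∑ x, ν x = 1 := by
    have h := marg_transfer μ VL (fun _ => (1:ℝ)) (fun a b _ => rfl)
    simp only [mul_one] at h
    rw [hνdef, h, hμ1]
  have hsuppν : ∀ x : Config n 2, ν x ≠ 0 → ∀ v, v ∉ VL → x v = 0 :=
    fun x hx => marginalOn_support hx
  have hposν : ∀ P : Finset (Fin n), P ⊆ VL → ∀ x, 0 < massOf ν P x := by
    intro P hP x
    rw [hνdef, massOf_transfer μ VL P hP x]
    exact hposμ P hP x
  have hUsubVL : ∀ R : Finset (Fin k), VL \ unionBlocks U R ⊆ VL :=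
    fun R => Finset.sdiff_subset
  set F : Config n 2 → ℝ := condE μ VL f with hFdef
  have hFdep : DepOn VL F := condE_depOn μ VL f
  have hltv : ∀ P : Finset (Fin n), P ⊆ VL →
      ∑ σ, μ σ * varD (restrictDist μ P σ) f
        = (∑ σ, μ σ * varD (restrictDist μ VL σ) f)
          + ∑ σ, μ σ * varD (restrictDist μ P σ) F := by
    intro P hP
    have hpoint : ∀ σ : Config n 2, varD (restrictDist μ P σ) f
        = (∑ x, restrictDist μ P σ x * varD (restrictDist μ VL x) f)
          + varD (restrictDist μ P σ) F :=
      fun σ => ltv_point hP (hposμ P hP) (hposμ VL (Finset.Subset.refl VL)) σ f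
    calc ∑ σ, μ σ * varD (restrictDist μ P σ) f
        = ∑ σ, (μ σ * (∑ x, restrictDist μ P σ x * varD (restrictDist μ VL x) f)
            + μ σ * varD (restrictDist μ P σ) F) := by
          refine Finset.sum_congr rfl fun σ _ => ?_
          rw [hpoint σ]
          ring
      _ = (∑ σ, μ σ * (∑ x, restrictDist μ P σ x * varD (restrictDist μ VL x) f))
            + ∑ σ, μ σ * varD (restrictDist μ P σ) F := Finset.sum_add_distrib
      _ = (∑ σ, μ σ * varD (restrictDist μ VL σ) f)
            + ∑ σ, μ σ * varD (restrictDist μ P σ) F := by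
          rw [top_stationary hμ1 (hposμ P hP) _]
  set T : ℝ := ∑ σ, μ σ * varD (restrictDist μ VL σ) f with hTdef
  have hT0 : 0 ≤ T := by
    rw [hTdef]
    refine Finset.sum_nonneg fun σ _ => mul_nonneg (hμ0 σ) ?_
    exact varD_nonneg (restrictDist_nonneg hμ0 (hposμ VL (Finset.Subset.refl VL) σ))
  have hL1 : varD μ f = ∑ σ, μ σ * varD (restrictDist μ (∅ : Finset (Fin n)) σ) f := by
    have he : ∀ σ : Config n 2,
        varD (restrictDist μ (∅ : Finset (Fin n)) σ) f = varD μ f :=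
      fun σ => by rw [restrictDist_empty hμ1]
    calc varD μ f = 1 * varD μ f := (one_mul _).symm
      _ = (∑ σ, μ σ) * varD μ f := by rw [hμ1]
      _ = ∑ σ, μ σ * varD μ f := Finset.sum_mul _ _ _
      _ = ∑ σ, μ σ * varD (restrictDist μ (∅ : Finset (Fin n)) σ) f :=
          Finset.sum_congr rfl fun σ _ => by rw [he σ]
  have htrans : ∀ P : Finset (Fin n), P ⊆ VL →
      ∑ σ, μ σ * varD (restrictDist μ P σ) F
        = ∑ σ, ν σ * varD (restrictDist ν P σ) F := by
    intro P hP
    rw [hνdef]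
    exact (sum_var_transfer μ VL P hP F hFdep).symm
  have hind := nu_ind ν VL U ρ M hν0 hν1 hposν hsuppν hdisj hρ hM hCI
    (univ : Finset (Fin k)) (by rw [Finset.card_univ, Fintype.card_fin]; exact hk) F
  have huniv : VL \ unionBlocks U (univ : Finset (Fin k)) = ∅ := by
    rw [Finset.sdiff_eq_empty_iff_subset]
    intro v hv
    obtain ⟨i, hi⟩ := (hcover v).mp hv
    unfold unionBlocks
    exact Finset.mem_biUnion.mpr ⟨i, Finset.mem_univ i, hi⟩
  rw [huniv, Finset.card_univ, Fintype.card_fin] at hind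
  have hACV : ∀ R : Finset (Fin k), avgCondVar μ (unionBlocks U R ∪ VLᶜ) f
      = T + ∑ σ, ν σ * varD (restrictDist ν (VL \ unionBlocks U R) σ) F := by
    intro R
    have hc : (unionBlocks U R ∪ VLᶜ)ᶜ = VL \ unionBlocks U R := by
      ext v
      simp only [Finset.mem_compl, Finset.mem_union, Finset.mem_sdiff]
      tauto
    have h1 : avgCondVar μ (unionBlocks U R ∪ VLᶜ) f
        = ∑ σ, μ σ * varD (restrictDist μ (VL \ unionBlocks U R) σ) f := by
      unfold avgCondVar
      rw [hc]
    rw [h1, hltv _ (hUsubVL R), htrans _ (hUsubVL R)]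
  have hchoose : (0:ℝ) < (k.choose (2 * M) : ℝ) := by
    have : 0 < k.choose (2 * M) := Nat.choose_pos hk
    exact_mod_cast this
  have hcard : ((univ : Finset (Fin k)).powersetCard (2 * M)).card = k.choose (2 * M) := by
    rw [Finset.card_powersetCard, Finset.card_univ, Fintype.card_fin]
  have hRHS : ∑ R ∈ (univ : Finset (Fin k)).powersetCard (2 * M),
      avgCondVar μ (unionBlocks U R ∪ VLᶜ) f
      = (k.choose (2 * M) : ℝ) * T
        + ∑ R ∈ (univ : Finset (Fin k)).powersetCard (2 * M),
            ∑ σ, ν σ * varD (restrictDist ν (VL \ unionBlocks U R) σ) F := by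
    rw [Finset.sum_congr rfl fun R _ => hACV R, Finset.sum_add_distrib,
      Finset.sum_const, hcard, nsmul_eq_mul]
  have hLHS : varD μ f
      = T + ∑ σ, ν σ * varD (restrictDist ν (∅ : Finset (Fin n)) σ) F := by
    rw [hL1, hltv ∅ (Finset.empty_subset VL), htrans ∅ (Finset.empty_subset VL)]
  have hcoefchoose : (2:ℝ) ^ (k - 2 * M) / (k.choose (2 * M) : ℝ)
      * (k.choose (2 * M) : ℝ) = (2:ℝ) ^ (k - 2 * M) :=
    div_mul_cancel₀ _ hchoose.ne'
  have hpow1 : (1:ℝ) ≤ (2:ℝ) ^ (k - 2 * M) := one_le_pow₀ (by norm_num)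
  rw [hLHS, hRHS]
  rw [mul_add, ← mul_assoc, hcoefchoose]
  have hTbound : T ≤ (2:ℝ) ^ (k - 2 * M) * T := le_mul_of_one_le_left hT0 hpow1
  linarith [hind]

end Paper
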